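/- arXiv:2306.14703 — 6 statements merged into one kernel-verified Lean document; each statement's English description precedes it below -/
import Mathlib

section
/- (Kontoyiannis's lemma) For any (not necessarily stationary) process (X_i)_{i∈ℤ} over a D-ary alphabet, E[ 1 / (R^{(1)}_k · P(X₁^k | X₂^∞)) | X_{k+1}^∞ ] ≤ 1 + log D^k almost surely, where P(X₁^k | X₂^∞) denotes the conditional probability of the realized block X₁^k given the realized future X₂^∞. -/
open MeasureTheory ProbabilityTheory Filter Set
open scoped ENNReal NNReal

/-- The Hilberg exponent of a sequence of reals. -/
noncomputable def hilberg (a : ℕ → ℝ) : ℝ :=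
  Filter.limsup (fun k => max 0 (Real.log (a k) / Real.log k)) Filter.atTop

/-- The recurrence time `R⁽¹⁾_k`: the first position `i ≥ 1` such that
`X_{i+1}^{i+k} = X_1^k`, or `∞` if there is none. -/
noncomputable def recTime {Ω A : Type*} (X : ℤ → Ω → A) (k : ℕ) (ω : Ω) : ℕ∞ :=
  sInf {e : ℕ∞ | ∃ i : ℕ, e = (i : ℕ∞) ∧ 1 ≤ i ∧
    ∀ m : ℕ, m < k → X ((i : ℤ) + 1 + (m : ℤ)) ω = X (1 + (m : ℤ)) ω}

/-- The repetition time `R⁽²⁾_k`: the first position `i ≥ 1` such that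
`X_{i+1}^{i+k} = X_{j+1}^{j+k}` for some `0 ≤ j < i`, or `∞` if there is none. -/
noncomputable def repTime {Ω A : Type*} (X : ℤ → Ω → A) (k : ℕ) (ω : Ω) : ℕ∞ :=
  sInf {e : ℕ∞ | ∃ i : ℕ, e = (i : ℕ∞) ∧ 1 ≤ i ∧ ∃ j : ℕ, j < i ∧
    ∀ m : ℕ, m < k → X ((i : ℤ) + 1 + (m : ℤ)) ω = X ((j : ℤ) + 1 + (m : ℤ)) ω}

/-- The longest match length `L⁽¹⁾_n`. -/
noncomputable def matchLen {Ω A : Type*} (X : ℤ → Ω → A) (n : ℕ) (ω : Ω) : ℕ :=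
  sSup ({0} ∪ {k : ℕ | 1 ≤ k ∧ ∃ i : ℕ, 0 < i ∧ i + k ≤ n ∧
    ∀ m : ℕ, m < k → X ((i : ℤ) + 1 + (m : ℤ)) ω = X (1 + (m : ℤ)) ω})

/-- The maximal repetition length `L⁽²⁾_n`. -/
noncomputable def repLen {Ω A : Type*} (X : ℤ → Ω → A) (n : ℕ) (ω : Ω) : ℕ :=
  sSup ({0} ∪ {k : ℕ | 1 ≤ k ∧ ∃ i j : ℕ, j < i ∧ i + k ≤ n ∧
    ∀ m : ℕ, m < k → X ((i : ℤ) + 1 + (m : ℤ)) ω = X ((j : ℤ) + 1 + (m : ℤ)) ω})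

/-- `P(X_1^k)` evaluated at the realized block: the probability that a fresh
sample agrees with `ω` on coordinates `1,…,k`. -/
noncomputable def blockProb {Ω A : Type*} [MeasurableSpace Ω] (μ : Measure Ω)
    (X : ℤ → Ω → A) (k : ℕ) (ω : Ω) : ℝ :=
  (μ {ω' | ∀ m : ℕ, m < k → X (1 + (m : ℤ)) ω' = X (1 + (m : ℤ)) ω}).toReal

/-- The Shannon entropy `H₁(X_1^k) = E[-log P(X_1^k)]`. -/
noncomputable def shannonEnt {Ω A : Type*} [MeasurableSpace Ω] (μ : Measure Ω)
    (X : ℤ → Ω → A) (k : ℕ) : ℝ :=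
  ∫ ω, -Real.log (blockProb μ X k ω) ∂μ

/-- The σ-algebra generated by the future coordinates `X_j, X_{j+1}, …`. -/
def futureSigma {Ω A : Type*} [MeasurableSpace A] (X : ℤ → Ω → A) (j : ℤ) :
    MeasurableSpace Ω :=
  ⨆ i : {i : ℤ // j ≤ i}, MeasurableSpace.comap (X i) inferInstance

/-- `P(X_1^k | X_j^∞)` evaluated at the realized block: the conditional probability,
given the σ-algebra of the future `X_j^∞`, of the block `X_1^k`, evaluated at the
realized value of `X_1^k`. -/
noncomputable def condBlockProb {Ω A : Type*} [MeasurableSpace Ω] [MeasurableSpace A]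
    (μ : Measure Ω) (X : ℤ → Ω → A) (k : ℕ) (j : ℤ) (ω : Ω) : ℝ :=
  ∑' x : Fin k → A,
    ({ω'' | ∀ m : Fin k, X (1 + (m : ℤ)) ω'' = x m}.indicator (fun _ => (1 : ℝ)) ω) *
      (μ[({ω' | ∀ m : Fin k, X (1 + (m : ℤ)) ω' = x m}.indicator fun _ => (1 : ℝ)) |
        futureSigma X j]) ω

/-- The min-entropy `H_∞(X_1^k) = -log max_x P(X_1^k = x)`. -/
noncomputable def minEntropy {Ω A : Type*} [MeasurableSpace Ω] (μ : Measure Ω)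
    (X : ℤ → Ω → A) (k : ℕ) : ℝ :=
  -Real.log (⨆ x : Fin k → A, (μ {ω | ∀ m : Fin k, X (1 + (m : ℤ)) ω = x m}).toReal)

/-- The conditional min-entropy `H_∞(X_1^k | X_{k+1}^{k+i}) = -log E[max_x P(X_1^k = x | X_{k+1}^{k+i})]`,
written as `-log ∑_y max_x P(X_1^k = x, X_{k+1}^{k+i} = y)`. -/
noncomputable def condMinEntropy {Ω A : Type*} [MeasurableSpace Ω] (μ : Measure Ω)
    (X : ℤ → Ω → A) (k i : ℕ) : ℝ :=
  -Real.log (∑' y : Fin i → A, ⨆ x : Fin k → A,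
    (μ {ω | (∀ m : Fin k, X (1 + (m : ℤ)) ω = x m) ∧
      ∀ m : Fin i, X ((k : ℤ) + 1 + (m : ℤ)) ω = y m}).toReal)

/-- The context length `I_k := min {i ≥ 1 : log i ≥ H_∞(X_1^k | X_{k+1}^{k+i})}`. -/
noncomputable def contextLen {Ω A : Type*} [MeasurableSpace Ω] (μ : Measure Ω)
    (X : ℤ → Ω → A) (k : ℕ) : ℕ :=
  sInf {i : ℕ | 1 ≤ i ∧ condMinEntropy μ X k i ≤ Real.log i}

/-- The weighted conditional entropy
`H_•(X_1^k | X_{k+1}^∞) := -log ∑_{i=1}^∞ e^{-H_∞(X_1^k|X_{k+1}^{k+i})}/(i(i+1))`. -/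
noncomputable def weightedCondEntropy {Ω A : Type*} [MeasurableSpace Ω] (μ : Measure Ω)
    (X : ℤ → Ω → A) (k : ℕ) : ℝ :=
  -Real.log (∑' i : ℕ,
    Real.exp (-condMinEntropy μ X k (i + 1)) / ((i + 1) * (i + 2)))

/-- The median of a real random variable: `sup {r : P(X < r) ≤ 1/2}`. -/
noncomputable def medianOf {Ω : Type*} [MeasurableSpace Ω] (μ : Measure Ω) (f : Ω → ℝ) : ℝ :=
  sSup {r : ℝ | (μ {ω | f ω < r}).toReal ≤ 1 / 2}


/-- Harmonic number bound: `∑_{i=1}^n 1/i ≤ 1 + log n`. -/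
lemma aux_harmonic_le (n : ℕ) (hn : 1 ≤ n) :
    ∑ i ∈ Finset.Icc 1 n, ((i : ℝ))⁻¹ ≤ 1 + Real.log n := by
  induction n with
  | zero => omega
  | succ n ih =>
    rcases Nat.lt_or_ge 1 (n+1) with h | h
    · have hn1 : 1 ≤ n := by omega
      have hrec := ih hn1
      rw [Finset.sum_Icc_succ_top (by omega : 1 ≤ n + 1)]
      have hkey : ((n + 1 : ℕ) : ℝ)⁻¹ ≤ Real.log (n + 1 : ℕ) - Real.log n := by
        have hnpos : (0:ℝ) < n := by exact_mod_cast hn1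
        have h1 : Real.log (((n:ℝ)+1)/n)⁻¹ ≤ (((n:ℝ)+1)/n)⁻¹ - 1 :=
          Real.log_le_sub_one_of_pos (by positivity)
        rw [Real.log_inv] at h1
        have h2 : 1 - (((n:ℝ)+1)/n)⁻¹ ≤ Real.log (((n:ℝ)+1)/n) := by linarith
        rw [Real.log_div (by positivity) (by positivity)] at h2
        have h3 : 1 - (((n:ℝ)+1)/n)⁻¹ = ((n:ℝ)+1)⁻¹ := by
          rw [inv_div]
          field_simp
          ring
        rw [h3] at h2
        push_cast
        linarith
      have hlog : Real.log n ≤ Real.log (n+1 : ℕ) := by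
        apply Real.log_le_log (by exact_mod_cast hn1)
        push_cast; linarith
      push_cast at hkey hrec ⊢
      linarith
    · have : n = 0 := by omega
      subst this
      simp

/-- A finset of distinct positive integers has inverse-sum at most the harmonic sum. -/
lemma aux_sum_inv_le_harmonic :
    ∀ (n : ℕ) (S : Finset ℕ), S.card = n → (∀ i ∈ S, 1 ≤ i) →
      ∑ i ∈ S, ((i : ℝ))⁻¹ ≤ ∑ i ∈ Finset.Icc 1 n, ((i : ℝ))⁻¹ := by
  intro n
  induction n with
  | zero =>
    intro S hcard _
    rw [Finset.card_eq_zero] at hcard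
    subst hcard; simp
  | succ n ih =>
    intro S hcard hpos
    have hne : S.Nonempty := Finset.card_pos.mp (by omega)
    set M := S.max' hne with hM
    have hMS : M ∈ S := S.max'_mem hne
    have hsub : S ⊆ Finset.Icc 1 M := by
      intro i hi
      exact Finset.mem_Icc.mpr ⟨hpos i hi, S.le_max' i hi⟩
    have hMcard : n + 1 ≤ M := by
      have := Finset.card_le_card hsub
      rw [hcard, Nat.card_Icc] at this
      omega
    have herase : (S.erase M).card = n := by
      rw [Finset.card_erase_of_mem hMS, hcard]
      omega
    have hrec := ih (S.erase M) herase (fun i hi => hpos i (Finset.mem_of_mem_erase hi))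
    rw [← Finset.sum_erase_add S _ hMS, Finset.sum_Icc_succ_top (by omega : 1 ≤ n + 1)]
    have hMinv : ((M : ℝ))⁻¹ ≤ ((n + 1 : ℕ) : ℝ)⁻¹ := by
      apply inv_anti₀
      · positivity
      · exact_mod_cast hMcard
    push_cast at hMinv ⊢
    linarith

/-- Inverse-sum over distinct positive integers, at most `N` many, is `≤ 1 + log N`. -/
lemma aux_sum_le (S : Finset ℕ) (hpos : ∀ i ∈ S, 1 ≤ i) (N : ℕ) (hN : 1 ≤ N)
    (hcard : S.card ≤ N) : ∑ i ∈ S, ((i : ℝ))⁻¹ ≤ 1 + Real.log N := by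
  rcases Nat.eq_zero_or_pos S.card with h0 | h1
  · rw [Finset.card_eq_zero] at h0
    subst h0
    have : (0:ℝ) ≤ Real.log N := Real.log_nonneg (by exact_mod_cast hN)
    simp
    linarith
  · calc ∑ i ∈ S, ((i:ℝ))⁻¹ ≤ ∑ i ∈ Finset.Icc 1 S.card, ((i:ℝ))⁻¹ :=
        aux_sum_inv_le_harmonic S.card S rfl hpos
    _ ≤ 1 + Real.log S.card := aux_harmonic_le _ h1
    _ ≤ 1 + Real.log N := by
        have := Real.log_le_log (by exact_mod_cast h1 : (0:ℝ) < S.card)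
          (show (S.card:ℝ) ≤ N by exact_mod_cast hcard)
        linarith

/-- `toNat` of the `ℕ∞`-infimum of a coerced set of naturals is the `ℕ`-infimum. -/
lemma aux_toNat_sInf (Q : ℕ → Prop) :
    (sInf {e : ℕ∞ | ∃ i : ℕ, e = (i : ℕ∞) ∧ Q i}).toNat = sInf {i : ℕ | Q i} := by
  rcases Set.eq_empty_or_nonempty {i : ℕ | Q i} with hS | hS
  · have h1 : {e : ℕ∞ | ∃ i : ℕ, e = (i : ℕ∞) ∧ Q i} = ∅ := by
      ext e
      simp only [Set.mem_setOf_eq, Set.mem_empty_iff_false, iff_false]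
      rintro ⟨i, _, hQ⟩
      exact Set.eq_empty_iff_forall_notMem.mp hS i hQ
    rw [h1, sInf_empty, Nat.sInf_eq_zero.mpr (Or.inr hS)]
    rfl
  · have hmem : sInf {i : ℕ | Q i} ∈ {i : ℕ | Q i} := Nat.sInf_mem hS
    have h1 : sInf {e : ℕ∞ | ∃ i : ℕ, e = (i : ℕ∞) ∧ Q i}
        = ((sInf {i : ℕ | Q i} : ℕ) : ℕ∞) := by
      apply le_antisymm
      · exact sInf_le ⟨sInf {i : ℕ | Q i}, rfl, hmem⟩
      · apply le_sInf
        rintro e ⟨i, rfl, hQ⟩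
        exact_mod_cast Nat.sInf_le hQ
    rw [h1]
    rfl

lemma aux_sInf_eq_zero_iff (T : Set ℕ) (hT : 0 ∉ T) :
    sInf T = 0 ↔ ∀ i, i ∉ T := by
  rw [Nat.sInf_eq_zero]
  constructor
  · rintro (h0 | hemp)
    · exact absurd h0 hT
    · intro i hi
      exact Set.eq_empty_iff_forall_notMem.mp hemp i hi
  · intro h
    exact Or.inr (Set.eq_empty_iff_forall_notMem.mpr h)

lemma aux_sInf_eq_succ_iff (T : Set ℕ) (n : ℕ) :
    sInf T = n + 1 ↔ (n + 1) ∈ T ∧ ∀ m, m ≤ n → m ∉ T := by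
  constructor
  · intro h
    have hne : T.Nonempty := by
      by_contra hemp
      rw [Set.not_nonempty_iff_eq_empty] at hemp
      rw [hemp, Nat.sInf_empty] at h
      omega
    constructor
    · rw [← h]; exact Nat.sInf_mem hne
    · intro m hm
      exact Nat.notMem_of_lt_sInf (by omega)
  · rintro ⟨h1, h2⟩
    apply le_antisymm (Nat.sInf_le h1)
    by_contra hlt
    push_neg at hlt
    have hmem : sInf T ∈ T := Nat.sInf_mem ⟨n+1, h1⟩
    exact h2 _ (by omega) hmem

-- block set
def ktB {Ω A : Type*} (X : ℤ → Ω → A) (k : ℕ) (x : Fin k → A) : Set Ω :=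
  {ω' | ∀ m : Fin k, X (1 + (m : ℤ)) ω' = x m}

noncomputable def ktP {Ω A : Type*} [MeasurableSpace Ω] [MeasurableSpace A]
    (μ : Measure Ω) (X : ℤ → Ω → A) (k : ℕ) (x : Fin k → A) : Ω → ℝ :=
  μ[(ktB X k x).indicator (fun _ => (1 : ℝ)) | futureSigma X 2]

noncomputable def ktR {Ω A : Type*} (X : ℤ → Ω → A) (k : ℕ) (x : Fin k → A) (ω : Ω) : ℕ :=
  sInf {i : ℕ | 1 ≤ i ∧ ∀ m : Fin k, X ((i : ℤ) + 1 + (m : ℤ)) ω = x m}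

noncomputable def ktH {Ω A : Type*} [MeasurableSpace Ω] [MeasurableSpace A]
    (μ : Measure Ω) (X : ℤ → Ω → A) (k : ℕ) (x : Fin k → A) (ω : Ω) : ℝ :=
  1 / ((ktR X k x ω : ℝ) * ktP μ X k x ω)

noncomputable def ktT {Ω A : Type*} [MeasurableSpace Ω] [MeasurableSpace A]
    (μ : Measure Ω) (X : ℤ → Ω → A) (k : ℕ) (x : Fin k → A) (ω : Ω) : ℝ :=
  ktH μ X k x ω * (ktB X k x).indicator (fun _ => (1 : ℝ)) ω

lemma ktB_uniq {Ω A : Type*} (X : ℤ → Ω → A) (k : ℕ) (x : Fin k → A) (ω : Ω)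
    (hx : ω ∈ ktB X k x) : x = fun m : Fin k => X (1 + (m : ℤ)) ω :=
  funext fun m => (hx m).symm

/-- The integrand decomposes as a sum over blocks. -/
lemma kt_f_eq {Ω A : Type*} [MeasurableSpace Ω] [MeasurableSpace A] [Fintype A]
    (μ : Measure Ω) (X : ℤ → Ω → A) (k : ℕ) (ω : Ω) :
    1 / (((recTime X k ω).toNat : ℝ) * condBlockProb μ X k 2 ω)
      = ∑ x : Fin k → A, ktT μ X k x ω := by
  classical
  set x0 : Fin k → A := fun m => X (1 + (m : ℤ)) ω with hx0
  have hmem : ω ∈ ktB X k x0 := fun m => rfl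
  have hsum : ∑ x : Fin k → A, ktT μ X k x ω = ktT μ X k x0 ω := by
    apply Finset.sum_eq_single x0
    · intro x _ hne
      unfold ktT
      rw [Set.indicator_of_notMem (fun hx => hne (ktB_uniq X k x ω hx)), mul_zero]
    · intro hne
      exact absurd (Finset.mem_univ _) hne
  rw [hsum]
  have hcond : condBlockProb μ X k 2 ω = ktP μ X k x0 ω := by
    unfold condBlockProb
    rw [tsum_fintype]
    simp only [show ∀ x : Fin k → A,
      {ω'' : Ω | ∀ m : Fin k, X (1 + (m : ℤ)) ω'' = x m} = ktB X k x from fun _ => rfl]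
    rw [Finset.sum_eq_single x0]
    · rw [Set.indicator_of_mem hmem, one_mul]
      rfl
    · intro x _ hne
      rw [Set.indicator_of_notMem (fun hx => hne (ktB_uniq X k x ω hx)), zero_mul]
    · intro hne
      exact absurd (Finset.mem_univ _) hne
  have hrec : (recTime X k ω).toNat = ktR X k x0 ω := by
    have h1 : (recTime X k ω).toNat
        = sInf {i : ℕ | 1 ≤ i ∧ ∀ m : ℕ, m < k →
            X ((i : ℤ) + 1 + (m : ℤ)) ω = X (1 + (m : ℤ)) ω} :=
      aux_toNat_sInf _
    rw [h1]
    unfold ktR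
    congr 1
    ext i
    simp only [Set.mem_setOf_eq, and_congr_right_iff]
    intro _
    constructor
    · intro hall m
      exact hall m.1 m.2
    · intro hall m hm
      exact hall ⟨m, hm⟩
  rw [hcond, hrec]
  unfold ktT
  rw [Set.indicator_of_mem hmem, mul_one]
  rfl

lemma ktR_measurable {Ω A : Type*} [MeasurableSpace A] [MeasurableSingletonClass A]
    (X : ℤ → Ω → A) (k : ℕ) (x : Fin k → A) :
    Measurable[futureSigma X 2] (ktR X k x) := by
  letI : MeasurableSpace Ω := futureSigma X 2
  have hX : ∀ j : ℤ, 2 ≤ j → Measurable[futureSigma X 2] (X j) := fun j hj =>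
    Measurable.of_comap_le (le_iSup
      (fun i : {i : ℤ // (2:ℤ) ≤ i} => MeasurableSpace.comap (X i.1) inferInstance) ⟨j, hj⟩)
  have hT : ∀ i : ℕ, MeasurableSet[futureSigma X 2]
      {ω | 1 ≤ i ∧ ∀ m : Fin k, X ((i : ℤ) + 1 + (m : ℤ)) ω = x m} := by
    intro i
    by_cases hi : 1 ≤ i
    · have heq : {ω | 1 ≤ i ∧ ∀ m : Fin k, X ((i : ℤ) + 1 + (m : ℤ)) ω = x m}
          = ⋂ m : Fin k, (X ((i : ℤ) + 1 + (m : ℤ)))⁻¹' {x m} := by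
        ext ω
        simp [hi, Set.mem_iInter]
      rw [heq]
      refine MeasurableSet.iInter fun m => ?_
      refine hX _ ?_ (measurableSet_singleton _)
      have h1 : (1:ℤ) ≤ (i:ℤ) := by exact_mod_cast hi
      have h2 : (0:ℤ) ≤ ((m : ℕ) : ℤ) := Int.natCast_nonneg _
      omega
    · have heq : {ω : Ω | 1 ≤ i ∧ ∀ m : Fin k, X ((i : ℤ) + 1 + (m : ℤ)) ω = x m} = ∅ := by
        ext ω; simp [hi]
      rw [heq]
      exact MeasurableSet.empty
  apply measurable_to_countable'
  intro n
  match n with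
  | 0 =>
    have heq : ktR X k x ⁻¹' {0}
        = ⋂ i : ℕ, {ω | 1 ≤ i ∧ ∀ m : Fin k, X ((i : ℤ) + 1 + (m : ℤ)) ω = x m}ᶜ := by
      ext ω
      simp only [Set.mem_preimage, Set.mem_singleton_iff, Set.mem_iInter, Set.mem_compl_iff]
      rw [show ktR X k x ω = sInf {i : ℕ | 1 ≤ i ∧
        ∀ m : Fin k, X ((i : ℤ) + 1 + (m : ℤ)) ω = x m} from rfl]
      rw [aux_sInf_eq_zero_iff _ (by simp)]
      rfl
    rw [heq]
    exact MeasurableSet.iInter fun i => (hT i).compl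
  | (n+1) =>
    have heq : ktR X k x ⁻¹' {n+1}
        = {ω | 1 ≤ n+1 ∧ ∀ m : Fin k, X (((n+1 : ℕ) : ℤ) + 1 + (m : ℤ)) ω = x m}
          ∩ ⋂ (j : ℕ) (_ : j ≤ n),
            {ω | 1 ≤ j ∧ ∀ m : Fin k, X ((j : ℤ) + 1 + (m : ℤ)) ω = x m}ᶜ := by
      ext ω
      simp only [Set.mem_preimage, Set.mem_singleton_iff, Set.mem_inter_iff, Set.mem_iInter,
        Set.mem_compl_iff]
      rw [show ktR X k x ω = sInf {i : ℕ | 1 ≤ i ∧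
        ∀ m : Fin k, X ((i : ℤ) + 1 + (m : ℤ)) ω = x m} from rfl]
      rw [aux_sInf_eq_succ_iff]
      rfl
    rw [heq]
    exact ((hT (n+1)).inter
      (MeasurableSet.iInter fun j => MeasurableSet.iInter fun _ => (hT j).compl))

lemma ktH_sm {Ω A : Type*} [MeasurableSpace Ω] [MeasurableSpace A] [MeasurableSingletonClass A]
    (μ : Measure Ω) (X : ℤ → Ω → A) (k : ℕ) (x : Fin k → A) :
    StronglyMeasurable[futureSigma X 2] (ktH μ X k x) := by
  apply Measurable.stronglyMeasurable
  apply Measurable.div measurable_const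
  exact ((measurable_from_nat (f := fun n : ℕ => (n : ℝ))).comp
    (ktR_measurable X k x)).mul stronglyMeasurable_condExp.measurable

/-- **Kontoyiannis's lemma.** For any process over a `D`-ary alphabet,
`E[1/(R⁽¹⁾_k · P(X₁^k|X₂^∞)) | X_{k+1}^∞] ≤ 1 + log D^k` almost surely. -/
theorem kontoyiannis_lemma {Ω A : Type*} [MeasurableSpace Ω] [MeasurableSpace A]
    [MeasurableSingletonClass A] [Fintype A]
    (μ : Measure Ω) [IsProbabilityMeasure μ] (X : ℤ → Ω → A) (hXmeas : ∀ i, Measurable (X i))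
    (k : ℕ) :
    ∀ᵐ ω ∂μ,
      (μ[fun ω' => 1 / (((recTime X k ω').toNat : ℝ) * condBlockProb μ X k 2 ω') |
          futureSigma X ((k : ℤ) + 1)]) ω
        ≤ 1 + Real.log ((Fintype.card A : ℝ) ^ k) := by
  classical
  have hΩ : Nonempty Ω := by
    by_contra hno
    rw [not_nonempty_iff] at hno
    have h1 : μ Set.univ = 1 := measure_univ
    rw [Set.univ_eq_empty_iff.mpr hno, measure_empty] at h1
    exact zero_ne_one h1
  have hA : Nonempty A := ⟨X 0 (Classical.arbitrary Ω)⟩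
  have hD : 1 ≤ Fintype.card A := Fintype.card_pos
  have hm_le : ∀ j : ℤ, futureSigma X j ≤ ‹MeasurableSpace Ω› := fun j =>
    iSup_le fun i => (hXmeas i.1).comap_le
  rcases Nat.eq_zero_or_pos k with hk0 | hk
  · -- k = 0 case
    subst hk0
    have hrec : ∀ ω : Ω, ((recTime X 0 ω).toNat : ℝ) = 1 := by
      intro ω
      have h1 : (recTime X 0 ω).toNat = sInf {i : ℕ | 1 ≤ i ∧ ∀ m : ℕ, m < 0 →
          X ((i:ℤ)+1+(m:ℤ)) ω = X (1+(m:ℤ)) ω} := aux_toNat_sInf _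
      have h2 : {i : ℕ | 1 ≤ i ∧ ∀ m : ℕ, m < 0 →
          X ((i:ℤ)+1+(m:ℤ)) ω = X (1+(m:ℤ)) ω} = Set.Ici 1 := by
        ext i
        simp [Set.mem_Ici]
      rw [h1, h2, csInf_Ici]
      norm_num
    have hcond : ∀ ω : Ω, condBlockProb μ X 0 2 ω = 1 := by
      intro ω
      unfold condBlockProb
      rw [tsum_fintype]
      have huniv : ∀ x : Fin 0 → A,
          {ω' : Ω | ∀ m : Fin 0, X (1+(m:ℤ)) ω' = x m} = Set.univ :=
        fun x => Set.eq_univ_of_forall (fun ω' m => m.elim0)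
      simp only [huniv, Set.indicator_univ]
      rw [condExp_const (hm_le 2)]
      simp
    have hfun : (fun ω' => 1 / (((recTime X 0 ω').toNat : ℝ) * condBlockProb μ X 0 2 ω'))
        = fun _ : Ω => (1:ℝ) := by
      funext ω'
      rw [hrec, hcond]
      norm_num
    rw [hfun, condExp_const (hm_le _)]
    filter_upwards with ω
    simp
  · -- k ≥ 1 case
    have hm2 : futureSigma X 2 ≤ ‹MeasurableSpace Ω› := hm_le 2
    have hm12 : futureSigma X ((k:ℤ)+1) ≤ futureSigma X 2 := by
      refine iSup_le fun i => ?_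
      have hi := i.2
      have hk' : (1:ℤ) ≤ (k:ℤ) := by exact_mod_cast hk
      exact le_iSup (fun j : {j : ℤ // (2:ℤ) ≤ j} =>
        MeasurableSpace.comap (X j.1) inferInstance) ⟨i.1, by omega⟩
    have hBmeas : ∀ x : Fin k → A, MeasurableSet (ktB X k x) := by
      intro x
      have heq : ktB X k x = ⋂ m : Fin k, (X (1+(m:ℤ)))⁻¹' {x m} := by
        ext ω
        simp [ktB, Set.mem_iInter]
      rw [heq]
      exact MeasurableSet.iInter fun m => (hXmeas _) (measurableSet_singleton _)
    have hfeq : (fun ω' => 1 / (((recTime X k ω').toNat : ℝ) * condBlockProb μ X k 2 ω'))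
        = ∑ x : Fin k → A, ktT μ X k x := by
      funext ω'
      rw [kt_f_eq μ X k ω']
      rw [Finset.sum_apply]
    rw [hfeq]
    have hlogpow : (0:ℝ) ≤ Real.log ((Fintype.card A : ℝ)^k) :=
      Real.log_nonneg (one_le_pow₀ (by exact_mod_cast hD))
    by_cases hint : Integrable (∑ x : Fin k → A, ktT μ X k x) μ
    swap
    · rw [condExp_of_not_integrable hint]
      filter_upwards with ω
      simp only [Pi.zero_apply]
      linarith
    have hTint : ∀ x : Fin k → A, Integrable (ktT μ X k x) μ := by
      intro x
      have heq : ktT μ X k x = (ktB X k x).indicator (∑ y : Fin k → A, ktT μ X k y) := by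
        funext ω
        by_cases hω : ω ∈ ktB X k x
        · rw [Set.indicator_of_mem hω, Finset.sum_apply]
          symm
          apply Finset.sum_eq_single x
          · intro y _ hne
            unfold ktT
            rw [Set.indicator_of_notMem, mul_zero]
            intro hy
            exact hne ((ktB_uniq X k y ω hy).trans (ktB_uniq X k x ω hω).symm)
          · intro hne
            exact absurd (Finset.mem_univ _) hne
        · rw [Set.indicator_of_notMem hω]
          unfold ktT
          rw [Set.indicator_of_notMem hω, mul_zero]
      rw [heq]
      exact hint.indicator (hBmeas x)
    have hIind : ∀ x : Fin k → A, Integrable ((ktB X k x).indicator (fun _ => (1:ℝ))) μ :=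
      fun x => (integrable_const (1:ℝ)).indicator (hBmeas x)
    have hpull : ∀ x : Fin k → A,
        μ[ktT μ X k x|futureSigma X 2] =ᵐ[μ] fun ω => ktH μ X k x ω * ktP μ X k x ω := by
      intro x
      exact condExp_mul_of_stronglyMeasurable_left (ktH_sm μ X k x)
        (show Integrable (ktH μ X k x * (ktB X k x).indicator (fun _ => (1:ℝ))) μ from hTint x)
        (hIind x)
    have hsum2 : μ[∑ x : Fin k → A, ktT μ X k x|futureSigma X 2]
        =ᵐ[μ] ∑ x : Fin k → A, μ[ktT μ X k x|futureSigma X 2] :=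
      condExp_finsetSum (fun x _ => hTint x) _
    have hG : μ[∑ x : Fin k → A, ktT μ X k x|futureSigma X 2]
        =ᵐ[μ] fun ω => ∑ x : Fin k → A, ktH μ X k x ω * ktP μ X k x ω := by
      have hall : ∀ᵐ ω ∂μ, ∀ x : Fin k → A,
          (μ[ktT μ X k x|futureSigma X 2]) ω = ktH μ X k x ω * ktP μ X k x ω :=
        ae_all_iff.mpr fun x => hpull x
      filter_upwards [hsum2, hall] with ω h1 h2
      rw [h1, Finset.sum_apply]
      exact Finset.sum_congr rfl fun x _ => h2 x
    have hp0 : ∀ᵐ ω ∂μ, ∀ x : Fin k → A, 0 ≤ ktP μ X k x ω :=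
      ae_all_iff.mpr fun x => condExp_nonneg
        (Filter.Eventually.of_forall fun ω => Set.indicator_nonneg (fun _ _ => zero_le_one) ω)
    have hN1 : 1 ≤ Fintype.card A ^ k := Nat.one_le_pow _ _ (by omega)
    have hGle : (fun ω => ∑ x : Fin k → A, ktH μ X k x ω * ktP μ X k x ω)
        ≤ᵐ[μ] fun _ => 1 + Real.log ((Fintype.card A : ℝ)^k) := by
      filter_upwards [hp0] with ω hω
      have step1 : ∑ x : Fin k → A, ktH μ X k x ω * ktP μ X k x ω
          ≤ ∑ x : Fin k → A, ((ktR X k x ω : ℝ))⁻¹ := by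
        apply Finset.sum_le_sum
        intro x _
        rcases eq_or_lt_of_le (hω x) with hq | hq
        · rw [← hq, mul_zero]
          positivity
        · rcases Nat.eq_zero_or_pos (ktR X k x ω) with hn | hn
          · unfold ktH
            rw [hn]
            norm_num
          · have hnpos : (0:ℝ) < (ktR X k x ω : ℝ) := by exact_mod_cast hn
            have hne1 : ((ktR X k x ω : ℝ)) ≠ 0 := ne_of_gt hnpos
            have hne2 : ktP μ X k x ω ≠ 0 := ne_of_gt hq
            unfold ktH
            rw [show 1 / ((ktR X k x ω : ℝ) * ktP μ X k x ω) * ktP μ X k x ω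
                = ((ktR X k x ω : ℝ))⁻¹ from by field_simp]
      have step2 : ∑ x : Fin k → A, ((ktR X k x ω : ℝ))⁻¹
          ≤ 1 + Real.log ((Fintype.card A : ℝ)^k) := by
        set s : Finset (Fin k → A) := Finset.univ.filter (fun x => ktR X k x ω ≠ 0) with hs
        have hsum_eq : ∑ x : Fin k → A, ((ktR X k x ω : ℝ))⁻¹
            = ∑ x ∈ s, ((ktR X k x ω : ℝ))⁻¹ := by
          symm
          apply Finset.sum_filter_of_ne
          intro x _ hx h0
          apply hx
          rw [h0]
          norm_num
        have hval : ∀ x ∈ s, ktR X k x ω ∈ {i : ℕ | 1 ≤ i ∧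
            ∀ m : Fin k, X ((i:ℤ)+1+(m:ℤ)) ω = x m} := by
          intro x hx
          rw [hs, Finset.mem_filter] at hx
          have hne : {i : ℕ | 1 ≤ i ∧
              ∀ m : Fin k, X ((i:ℤ)+1+(m:ℤ)) ω = x m}.Nonempty := by
            by_contra hemp
            rw [Set.not_nonempty_iff_eq_empty] at hemp
            exact hx.2 (by rw [show ktR X k x ω = sInf {i : ℕ | 1 ≤ i ∧
              ∀ m : Fin k, X ((i:ℤ)+1+(m:ℤ)) ω = x m} from rfl, hemp, Nat.sInf_empty])
          exact Nat.sInf_mem hne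
        have hinj : ∀ x ∈ s, ∀ y ∈ s, ktR X k x ω = ktR X k y ω → x = y := by
          intro x hx y hy hxy
          funext m
          have h1 := (hval x hx).2 m
          have h2 := (hval y hy).2 m
          rw [← h1, ← h2, hxy]
        have himg : ∑ x ∈ s, ((ktR X k x ω : ℝ))⁻¹
            = ∑ i ∈ s.image (fun x => ktR X k x ω), ((i:ℝ))⁻¹ :=
          (Finset.sum_image (f := fun i : ℕ => ((i:ℝ))⁻¹) (g := fun x => ktR X k x ω) hinj).symm
        have hcard : (s.image (fun x => ktR X k x ω)).card ≤ Fintype.card A ^ k := by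
          calc (s.image (fun x => ktR X k x ω)).card ≤ s.card := Finset.card_image_le
          _ ≤ (Finset.univ : Finset (Fin k → A)).card := Finset.card_filter_le _ _
          _ = Fintype.card A ^ k := by
              rw [Finset.card_univ]
              simp [Fintype.card_fun]
        have hpos' : ∀ i ∈ s.image (fun x => ktR X k x ω), 1 ≤ i := by
          intro i hi
          rw [Finset.mem_image] at hi
          obtain ⟨x, hx, rfl⟩ := hi
          exact (hval x hx).1
        have hfin := aux_sum_le _ hpos' (Fintype.card A ^ k) hN1 hcard
        rw [hsum_eq, himg]
        calc ∑ i ∈ s.image (fun x => ktR X k x ω), ((i:ℝ))⁻¹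
            ≤ 1 + Real.log ((Fintype.card A ^ k : ℕ) : ℝ) := hfin
        _ = 1 + Real.log ((Fintype.card A : ℝ)^k) := by norm_cast
      exact le_trans step1 step2
    have hGint : Integrable (fun ω => ∑ x : Fin k → A, ktH μ X k x ω * ktP μ X k x ω) μ :=
      integrable_condExp.congr hG
    have e1 := (condExp_condExp_of_le (μ := μ) (f := ∑ x : Fin k → A, ktT μ X k x) hm12 hm2).symm
    have e2 := condExp_congr_ae (m := futureSigma X ((k:ℤ)+1)) hG
    have e3 := condExp_mono (m := futureSigma X ((k:ℤ)+1)) hGint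
      (integrable_const (1 + Real.log ((Fintype.card A : ℝ)^k))) hGle
    rw [condExp_const (hm_le ((k:ℤ)+1))] at e3
    filter_upwards [e1, e2, e3] with ω h1 h2 h3
    rw [h1, h2]
    exact h3
end

section
/- Let (X_i)_{i∈ℤ} be a stationary ergodic process over a D-ary alphabet and let (ρ_k)_{k≥1} be positive numbers with ∑_{k=1}^∞ ρ_k < ∞. Then almost surely, for all sufficiently large k, -log P(X₁^k | X_{k+1}^∞) + log ρ_k - log k < log R^{(1)}_k < -log P(X₁^k) - log ρ_k. -/
open MeasureTheory ProbabilityTheory Filter Set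
open scoped ENNReal NNReal

namespace SandwichAux

variable {Ω A : Type*}

/-- matching predicate -/
def Mtch (X : ℤ → Ω → A) (k : ℕ) (i : ℕ) (ω : Ω) : Prop :=
  ∀ m : ℕ, m < k → X ((i : ℤ) + 1 + (m : ℤ)) ω = X (1 + (m : ℤ)) ω

/-- cylinder set -/
def cyl (X : ℤ → Ω → A) (k : ℕ) (x : Fin k → A) : Set Ω :=
  {ω' | ∀ m : Fin k, X (1 + (m : ℤ)) ω' = x m}

/-- realized block -/
def blockOf (X : ℤ → Ω → A) (k : ℕ) (ω : Ω) : Fin k → A := fun m => X (1 + (m : ℤ)) ω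

/-- block at position r -/
def blkAt (X : ℤ → Ω → A) (k : ℕ) (r : ℕ) (ω : Ω) : Fin k → A :=
  fun m => X ((r : ℤ) + 1 + (m : ℤ)) ω

lemma mem_cyl_iff {X : ℤ → Ω → A} {k : ℕ} {x : Fin k → A} {ω : Ω} :
    ω ∈ cyl X k x ↔ blockOf X k ω = x := by
  simp [cyl, blockOf, funext_iff]

lemma self_mem_cyl (X : ℤ → Ω → A) (k : ℕ) (ω : Ω) : ω ∈ cyl X k (blockOf X k ω) :=
  mem_cyl_iff.mpr rfl

lemma mtch_iff_blkAt {X : ℤ → Ω → A} {k r : ℕ} {ω : Ω} :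
    Mtch X k r ω ↔ blkAt X k r ω = blockOf X k ω := by
  constructor
  · intro h; funext m; exact h m m.2
  · intro h m hm; exact congrFun h ⟨m, hm⟩

lemma exists_first_match {X : ℤ → Ω → A} {k : ℕ} {ω : Ω}
    (h : ∃ i, 1 ≤ i ∧ Mtch X k i ω) :
    ∃ r : ℕ, 1 ≤ r ∧ Mtch X k r ω ∧ (∀ j, 1 ≤ j → j < r → ¬ Mtch X k j ω) ∧
      recTime X k ω = (r : ℕ∞) := by
  classical
  refine ⟨Nat.find h, (Nat.find_spec h).1, (Nat.find_spec h).2, ?_, ?_⟩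
  · intro j h1 hj hm
    exact Nat.find_min h hj ⟨h1, hm⟩
  · apply le_antisymm
    · exact sInf_le ⟨Nat.find h, rfl, (Nat.find_spec h).1, (Nat.find_spec h).2⟩
    · refine le_sInf ?_
      rintro e ⟨i, rfl, h1, h2⟩
      exact_mod_cast Nat.find_min' h ⟨h1, h2⟩

/-- shift along iterates -/
lemma shift_iterate {X : ℤ → Ω → A} {T : Ω → Ω}
    (hshift : ∀ i ω, X i (T ω) = X (i + 1) ω) (n : ℕ) (j : ℤ) (ω : Ω) :
    X j (T^[n] ω) = X (j + n) ω := by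
  induction n generalizing ω with
  | zero => simp
  | succ n ih =>
    rw [Function.iterate_succ_apply, ih, hshift]
    congr 1
    push_cast
    ring

lemma mtch_iff_iterate {X : ℤ → Ω → A} {T : Ω → Ω}
    (hshift : ∀ i ω, X i (T ω) = X (i + 1) ω) {k i : ℕ} {ω : Ω}
    (hω : ω ∈ cyl X k (blockOf X k ω)) :
    Mtch X k i ω ↔ T^[i] ω ∈ cyl X k (blockOf X k ω) := by
  constructor
  · intro h m
    rw [shift_iterate hshift]
    have := h m m.2
    rw [show (1 : ℤ) + (m : ℤ) + (i : ℕ) = (i : ℤ) + 1 + (m : ℤ) by ring] at *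
    exact this
  · intro h m hm
    have := h ⟨m, hm⟩
    rw [shift_iterate hshift] at this
    rw [show (1 : ℤ) + ((⟨m, hm⟩ : Fin k) : ℤ) + (i : ℕ) = (i : ℤ) + 1 + (m : ℤ) by
      simp; ring] at this
    exact this

/-- sum over distinct naturals ≥ k₀ of an antitone nonneg function -/
lemma sum_distinct_le (f : ℕ → ℝ) (hf : ∀ n, 0 ≤ f n) :
    ∀ (N : ℕ) (k₀ : ℕ) (S : Finset ℕ), (∀ a b, k₀ ≤ a → a ≤ b → f b ≤ f a) →
      S.card ≤ N → (∀ i ∈ S, k₀ ≤ i) → ∑ i ∈ S, f i ≤ ∑ t ∈ Finset.range N, f (k₀ + t) := by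
  intro N
  induction N with
  | zero =>
    intro k₀ S _ hcard _
    simp only [Nat.le_zero, Finset.card_eq_zero] at hcard
    simp [hcard]
  | succ N ih =>
    intro k₀ S hmono hcard hmem
    rcases S.eq_empty_or_nonempty with rfl | hS
    · simpa using Finset.sum_nonneg fun t _ => hf _
    · set m := S.min' hS with hm
      have hmS : m ∈ S := S.min'_mem hS
      have hkm : k₀ ≤ m := hmem m hmS
      have herase : ∀ i ∈ S.erase m, k₀ + 1 ≤ i := by
        intro i hi
        have h1 : i ∈ S := Finset.mem_of_mem_erase hi
        have h2 : i ≠ m := Finset.ne_of_mem_erase hi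
        have := S.min'_le i h1
        omega
      have hcard' : (S.erase m).card ≤ N := by
        have := Finset.card_erase_of_mem hmS
        omega
      have hmono' : ∀ a b, k₀ + 1 ≤ a → a ≤ b → f b ≤ f a := fun a b ha hab =>
        hmono a b (by omega) hab
      have hIH := ih (k₀ + 1) (S.erase m) hmono' hcard' herase
      have hsum : ∑ i ∈ S, f i = f m + ∑ i ∈ S.erase m, f i :=
        (Finset.add_sum_erase _ _ hmS).symm
      rw [hsum]
      have hrhs : ∑ t ∈ Finset.range (N + 1), f (k₀ + t)
          = f k₀ + ∑ t ∈ Finset.range N, f (k₀ + 1 + t) := by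
        rw [Finset.sum_range_succ']
        rw [add_comm]
        congr 1
        · apply Finset.sum_congr rfl
          intro t _
          congr 1
          omega
      rw [hrhs]
      exact add_le_add (hmono k₀ m le_rfl hkm) (le_trans hIH (le_of_eq rfl))

lemma range_harmonic_le (k₀ N : ℕ) (hk : 1 ≤ k₀) (hN : 1 ≤ N) :
    ∑ t ∈ Finset.range N, (1 : ℝ) / (k₀ + t) ≤ 1 + Real.log N := by
  obtain ⟨n, rfl⟩ : ∃ n, N = n + 1 := ⟨N - 1, by omega⟩
  rw [Finset.sum_range_succ']
  have h0 : (1 : ℝ) / (k₀ + (0 : ℕ)) ≤ 1 := by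
    rw [Nat.cast_zero, add_zero]
    rw [div_le_one (by positivity)]
    exact_mod_cast hk
  have htel : ∑ t ∈ Finset.range n, (1 : ℝ) / (k₀ + (t + 1))
      ≤ Real.log (k₀ + n) - Real.log k₀ := by
    have : ∀ t ∈ Finset.range n, (1 : ℝ) / (k₀ + (t + 1))
        ≤ Real.log (k₀ + (t + 1)) - Real.log (k₀ + t) := by
      intro t _
      have hpos : (0 : ℝ) < k₀ + t := by positivity
      have hpos' : (0 : ℝ) < (k₀ : ℝ) + (t + 1) := by positivity
      have hlog := Real.log_le_sub_one_of_pos (x := ((k₀ : ℝ) + t) / ((k₀ : ℝ) + (t + 1)))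
        (by positivity)
      rw [Real.log_div (ne_of_gt hpos) (ne_of_gt hpos')] at hlog
      have harith : ((k₀ : ℝ) + t) / ((k₀ : ℝ) + (t + 1)) - 1
          = -(1 / ((k₀ : ℝ) + (t + 1))) := by
        field_simp
        ring
      rw [harith] at hlog
      linarith
    calc ∑ t ∈ Finset.range n, (1 : ℝ) / (k₀ + (t + 1))
        ≤ ∑ t ∈ Finset.range n, (Real.log (k₀ + (t + 1)) - Real.log (k₀ + t)) :=
          Finset.sum_le_sum this
      _ = Real.log (k₀ + n) - Real.log (k₀ + 0) := by
          have := Finset.sum_range_sub (fun t => Real.log ((k₀ : ℝ) + t)) n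
          push_cast at this ⊢
          convert this using 2
      _ = Real.log (k₀ + n) - Real.log k₀ := by norm_num
  have hfin : Real.log ((k₀ : ℝ) + n) - Real.log k₀ ≤ Real.log (n + 1) := by
    have hle : (k₀ : ℝ) + n ≤ k₀ * (n + 1) := by
      have : (1 : ℝ) ≤ (k₀ : ℝ) := by exact_mod_cast hk
      nlinarith
    have h1 : Real.log ((k₀ : ℝ) + n) ≤ Real.log ((k₀ : ℝ) * (n + 1)) :=
      Real.log_le_log (by positivity) hle
    rw [Real.log_mul (by positivity) (by positivity)] at h1
    linarith
  push_cast
  push_cast at htel h0 hfin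
  linarith

/-! ### periodicity -/

def psiIdx (k i m : ℕ) : ℕ := 1 + m + i * ((k - 1 - m) / i + 1)

lemma psiIdx_ge {k i m : ℕ} (hi : 1 ≤ i) (hm : m < k) : k + 1 ≤ psiIdx k i m := by
  have h1 := Nat.div_add_mod (k - 1 - m) i
  have h2 := Nat.mod_lt (k - 1 - m) (show 0 < i by omega)
  unfold psiIdx
  have h3 : i * ((k - 1 - m) / i + 1) = i * ((k - 1 - m) / i) + i := by ring
  omega

def psiB (X : ℤ → Ω → A) (k i : ℕ) (ω : Ω) : Fin k → A :=
  fun m => X ((psiIdx k i m.val : ℕ) : ℤ) ω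

lemma mtch_chain {X : ℤ → Ω → A} {k i : ℕ} {ω : Ω} (h : Mtch X k i ω) :
    ∀ (s m : ℕ), m < k → (∀ s' < s, m + i * s' < k) →
      X (1 + (m : ℤ)) ω = X (((1 + m + i * s : ℕ) : ℤ)) ω := by
  intro s
  induction s with
  | zero =>
    intro m _ _
    have : ((1 + m + i * 0 : ℕ) : ℤ) = 1 + (m : ℤ) := by push_cast; ring
    rw [this]
  | succ s ih =>
    intro m hm hcond
    have hlt : m + i * s < k := hcond s (Nat.lt_succ_self s)
    have hstep := h (m + i * s) hlt
    have h1 : X (1 + (m : ℤ)) ω = X (((1 + m + i * s : ℕ) : ℤ)) ω :=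
      ih m hm fun s' hs' => hcond s' (by omega)
    rw [h1]
    have h2 : ((1 + m + i * s : ℕ) : ℤ) = 1 + ((m + i * s : ℕ) : ℤ) := by push_cast; ring
    have h3 : ((1 + m + i * (s + 1) : ℕ) : ℤ) = (i : ℤ) + 1 + ((m + i * s : ℕ) : ℤ) := by
      push_cast; ring
    rw [h2, h3, hstep]

lemma psiB_eq {X : ℤ → Ω → A} {k i : ℕ} {ω : Ω} (hi : 1 ≤ i) (hik : i < k)
    (h : Mtch X k i ω) : blockOf X k ω = psiB X k i ω := by
  funext m
  have hm : (m : ℕ) < k := m.2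
  have hcond : ∀ s' < (k - 1 - (m : ℕ)) / i + 1, (m : ℕ) + i * s' < k := by
    intro s' hs'
    have hs'' : s' ≤ (k - 1 - (m : ℕ)) / i := by omega
    have h4 : i * s' ≤ i * ((k - 1 - (m : ℕ)) / i) := Nat.mul_le_mul_left i hs''
    have hdm : (k - 1 - (m : ℕ)) / i * i ≤ k - 1 - (m : ℕ) := Nat.div_mul_le_self _ _
    have h5 : i * ((k - 1 - (m : ℕ)) / i) = (k - 1 - (m : ℕ)) / i * i := by ring
    omega
  exact mtch_chain h ((k - 1 - (m : ℕ)) / i + 1) (m : ℕ) hm hcond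

section Meas

variable [MeasurableSpace Ω] [MeasurableSpace A] [MeasurableSingletonClass A] [Fintype A]

lemma meas_cyl {X : ℤ → Ω → A} (hX : ∀ i, Measurable (X i)) (k : ℕ) (x : Fin k → A) :
    MeasurableSet (cyl X k x) := by
  have : cyl X k x = ⋂ m : Fin k, (X (1 + (m : ℤ))) ⁻¹' {x m} := by
    ext ω; simp [cyl]
  rw [this]
  exact MeasurableSet.iInter fun m => (hX _) (measurableSet_singleton _)

lemma cyl_pairwise_disjoint (X : ℤ → Ω → A) (k : ℕ) :
    ((Finset.univ : Finset (Fin k → A)) : Set (Fin k → A)).PairwiseDisjoint (cyl X k) := by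
  intro x _ y _ hxy
  rw [Function.onFun, Set.disjoint_left]
  intro ω h1 h2
  exact hxy ((mem_cyl_iff.mp h1).symm.trans (mem_cyl_iff.mp h2))

lemma sum_cyl_le {X : ℤ → Ω → A} (hX : ∀ i, Measurable (X i)) (k : ℕ)
    (μ : Measure Ω) [IsProbabilityMeasure μ] :
    ∑ x : Fin k → A, μ (cyl X k x) ≤ 1 := by
  rw [← measure_biUnion_finset (cyl_pairwise_disjoint X k) (fun x _ => meas_cyl hX k x)]
  exact prob_le_one

lemma return_bound (μ : Measure Ω) [IsProbabilityMeasure μ] {T : Ω → Ω}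
    (hT : MeasurePreserving T μ μ) {S : Set Ω} (hS : MeasurableSet S) (t : ℕ) :
    μ (S ∩ {ω | ∀ i : ℕ, 1 ≤ i → i ≤ t → T^[i] ω ∉ S}) ≤ ((t : ℝ≥0∞) + 1)⁻¹ := by
  have hmeasT : Measurable T := hT.measurable
  set B := S ∩ {ω | ∀ i : ℕ, 1 ≤ i → i ≤ t → T^[i] ω ∉ S} with hBdef
  have hB : MeasurableSet B := by
    apply hS.inter
    have : {ω | ∀ i : ℕ, 1 ≤ i → i ≤ t → T^[i] ω ∉ S}
        = ⋂ (i : ℕ), ⋂ (_ : 1 ≤ i), ⋂ (_ : i ≤ t), (T^[i]) ⁻¹' Sᶜ := by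
      ext ω; simp [Set.mem_iInter]
    rw [this]
    exact MeasurableSet.iInter fun i => MeasurableSet.iInter fun _ =>
      MeasurableSet.iInter fun _ => (hmeasT.iterate i) hS.compl
  have hdisj : (↑(Finset.range (t + 1)) : Set ℕ).PairwiseDisjoint
      (fun j : ℕ => T^[j] ⁻¹' B) := by
    intro j hj j' hj' hne
    simp only [Finset.coe_range, Set.mem_Iio] at hj hj'
    rw [Function.onFun, Set.disjoint_left]
    intro ω h1 h2
    rcases Nat.lt_or_ge j j' with hlt | hge
    · have ha : T^[j] ω ∈ B := h1
      have hb : T^[j'] ω ∈ B := h2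
      have key : T^[j' - j] (T^[j] ω) = T^[j'] ω := by
        rw [← Function.iterate_add_apply]
        congr 1; omega
      exact (ha.2 (j' - j) (by omega) (by omega)) (key ▸ hb.1)
    · have hlt : j' < j := by omega
      have ha : T^[j'] ω ∈ B := h2
      have hb : T^[j] ω ∈ B := h1
      have key : T^[j - j'] (T^[j'] ω) = T^[j] ω := by
        rw [← Function.iterate_add_apply]
        congr 1; omega
      exact (ha.2 (j - j') (by omega) (by omega)) (key ▸ hb.1)
  have hsum : ((t : ℝ≥0∞) + 1) * μ B ≤ 1 := by
    have h1 : ∑ j ∈ Finset.range (t + 1), μ (T^[j] ⁻¹' B) = ((t : ℝ≥0∞) + 1) * μ B := by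
      rw [Finset.sum_congr rfl fun j _ => (hT.iterate j).measure_preimage hB.nullMeasurableSet]
      rw [Finset.sum_const, Finset.card_range, nsmul_eq_mul]
      push_cast; ring
    rw [← h1, ← measure_biUnion_finset hdisj fun j _ => (hmeasT.iterate j) hB]
    exact prob_le_one
  rw [ENNReal.le_inv_iff_mul_le, mul_comm]
  exact hsum

lemma no_return_zero (μ : Measure Ω) [IsProbabilityMeasure μ] {T : Ω → Ω}
    (hT : MeasurePreserving T μ μ) {S : Set Ω} (hS : MeasurableSet S) :
    μ (S ∩ {ω | ∀ i : ℕ, 1 ≤ i → T^[i] ω ∉ S}) = 0 := by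
  by_contra h
  obtain ⟨n, hn⟩ := ENNReal.exists_inv_nat_lt h
  have hsub : S ∩ {ω | ∀ i : ℕ, 1 ≤ i → T^[i] ω ∉ S}
      ⊆ S ∩ {ω | ∀ i : ℕ, 1 ≤ i → i ≤ n → T^[i] ω ∉ S} := by
    intro ω hω; exact ⟨hω.1, fun i h1 _ => hω.2 i h1⟩
  have h1 := le_trans (measure_mono hsub) (return_bound μ hT hS n)
  have h2 : ((n : ℝ≥0∞) + 1)⁻¹ ≤ ((n : ℝ≥0∞))⁻¹ :=
    ENNReal.inv_le_inv' (by simp)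
  exact absurd (lt_of_lt_of_le hn (le_trans h1 h2)) (lt_irrefl _)

/-! ### future σ-algebra facts -/

lemma future_le {X : ℤ → Ω → A} (hX : ∀ i, Measurable (X i)) (j : ℤ) :
    futureSigma X j ≤ ‹MeasurableSpace Ω› :=
  iSup_le fun i => measurable_iff_comap_le.mp (hX i)

lemma meas_future {X : ℤ → Ω → A} {j i : ℤ} (hj : j ≤ i) :
    Measurable[futureSigma X j] (X i) :=
  measurable_iff_comap_le.mpr
    (le_iSup (fun i : {i : ℤ // j ≤ i} => MeasurableSpace.comap (X i) inferInstance) ⟨i, hj⟩)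

lemma meas_blkAt_future {X : ℤ → Ω → A} {k r : ℕ} (hr : k ≤ r) (x : Fin k → A) :
    MeasurableSet[futureSigma X ((k : ℤ) + 1)] {ω | blkAt X k r ω = x} := by
  have : {ω | blkAt X k r ω = x} = ⋂ m : Fin k, (X ((r : ℤ) + 1 + (m : ℤ))) ⁻¹' {x m} := by
    ext ω; simp [blkAt, funext_iff]
  rw [this]
  refine MeasurableSet.iInter fun m => ?_
  have hj : (k : ℤ) + 1 ≤ (r : ℤ) + 1 + (m : ℤ) := by
    have h1 : (0 : ℤ) ≤ (m : ℤ) := by positivity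
    have h2 : (k : ℤ) ≤ (r : ℤ) := by exact_mod_cast hr
    omega
  exact (meas_future hj) (measurableSet_singleton _)

lemma meas_psiB_future {X : ℤ → Ω → A} {k i : ℕ} (hi : 1 ≤ i) (x : Fin k → A) :
    MeasurableSet[futureSigma X ((k : ℤ) + 1)] {ω | psiB X k i ω = x} := by
  have : {ω | psiB X k i ω = x} = ⋂ m : Fin k, (X ((psiIdx k i m.val : ℕ) : ℤ)) ⁻¹' {x m} := by
    ext ω; simp [psiB, funext_iff]
  rw [this]
  refine MeasurableSet.iInter fun m => ?_
  have hj : (k : ℤ) + 1 ≤ ((psiIdx k i m.val : ℕ) : ℤ) := by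
    exact_mod_cast psiIdx_ge hi m.2
  exact (meas_future hj) (measurableSet_singleton _)

/-! ### conditional probability -/

noncomputable def Qf (μ : Measure Ω) (X : ℤ → Ω → A) (k : ℕ) (x : Fin k → A) : Ω → ℝ :=
  μ[(cyl X k x).indicator (fun _ => (1 : ℝ)) | futureSigma X ((k : ℤ) + 1)]

variable {X : ℤ → Ω → A} {μ : Measure Ω}

lemma condBlockProb_eq [IsProbabilityMeasure μ] (k : ℕ) (ω : Ω) :
    condBlockProb μ X k ((k : ℤ) + 1) ω = Qf μ X k (blockOf X k ω) ω := by
  unfold condBlockProb Qf cyl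
  rw [tsum_fintype]
  rw [Finset.sum_eq_single (blockOf X k ω)]
  · have hmem : ω ∈ {ω'' | ∀ m : Fin k, X (1 + (m : ℤ)) ω'' = blockOf X k ω m} :=
      fun m => rfl
    rw [Set.indicator_of_mem hmem, one_mul]
  · intro b _ hb
    have hmem' : ω ∉ {ω'' | ∀ m : Fin k, X (1 + (m : ℤ)) ω'' = b m} := by
      intro hmem
      have : blockOf X k ω = b := by funext m; exact hmem m
      exact hb this.symm
    rw [Set.indicator_of_notMem hmem', zero_mul]
  · intro h
    exact absurd (Finset.mem_univ _) h

lemma blockProb_eq (k : ℕ) (ω : Ω) :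
    blockProb μ X k ω = (μ (cyl X k (blockOf X k ω))).toReal := by
  unfold blockProb
  congr 2
  ext ω'
  simp only [Set.mem_setOf_eq, cyl, blockOf]
  constructor
  · intro h m
    exact h m m.2
  · intro h m hm
    exact h ⟨m, hm⟩

lemma meas_Qf_le (k : ℕ) (x : Fin k → A) (c : ℝ) :
    MeasurableSet[futureSigma X ((k : ℤ) + 1)] {ω | Qf μ X k x ω ≤ c} := by
  have : {ω | Qf μ X k x ω ≤ c} = (Qf μ X k x) ⁻¹' (Set.Iic c) := rfl
  rw [this]
  exact (stronglyMeasurable_condExp (m := futureSigma X ((k : ℤ) + 1))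
    (f := (cyl X k x).indicator (fun _ => (1 : ℝ)))).measurable measurableSet_Iic

variable [IsProbabilityMeasure μ]

lemma Qf_nonneg (hX : ∀ i, Measurable (X i)) (k : ℕ) (x : Fin k → A) :
    0 ≤ᵐ[μ] Qf μ X k x :=
  condExp_nonneg (ae_of_all _ fun ω => Set.indicator_nonneg (fun _ _ => zero_le_one) ω)

lemma Qf_le_one (hX : ∀ i, Measurable (X i)) (k : ℕ) (x : Fin k → A) :
    Qf μ X k x ≤ᵐ[μ] fun _ => (1 : ℝ) := by
  have hF := future_le hX ((k : ℤ) + 1)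
  haveI : SigmaFinite (μ.trim hF) := by infer_instance
  have hint : Integrable ((cyl X k x).indicator (fun _ => (1 : ℝ))) μ :=
    (integrable_const (1 : ℝ)).indicator (meas_cyl hX k x)
  have h := condExp_mono (m := futureSigma X ((k : ℤ) + 1)) hint (integrable_const (1 : ℝ))
    (ae_of_all _ fun ω => by
      by_cases hω : ω ∈ cyl X k x
      · rw [Set.indicator_of_mem hω]
      · rw [Set.indicator_of_notMem hω]; exact zero_le_one)
  rwa [condExp_const hF] at h

lemma key_eq (hX : ∀ i, Measurable (X i)) (k : ℕ) (x : Fin k → A) {G : Set Ω}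
    (hG : MeasurableSet[futureSigma X ((k : ℤ) + 1)] G) :
    μ (cyl X k x ∩ G) = ∫⁻ ω in G, ENNReal.ofReal (Qf μ X k x ω) ∂μ := by
  have hF := future_le hX ((k : ℤ) + 1)
  haveI : SigmaFinite (μ.trim hF) := by infer_instance
  have hint : Integrable ((cyl X k x).indicator (fun _ => (1 : ℝ))) μ :=
    (integrable_const (1 : ℝ)).indicator (meas_cyl hX k x)
  have h1 : ∫ ω in G, (cyl X k x).indicator (fun _ => (1 : ℝ)) ω ∂μ
      = (μ (cyl X k x ∩ G)).toReal := by
    rw [integral_indicator_const (1 : ℝ) (meas_cyl hX k x), smul_eq_mul, mul_one,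
      measureReal_def, Measure.restrict_apply (meas_cyl hX k x)]
  have h2 : ∫ ω in G, Qf μ X k x ω ∂μ
      = ∫ ω in G, (cyl X k x).indicator (fun _ => (1 : ℝ)) ω ∂μ :=
    setIntegral_condExp hF hint hG
  have h3 : ∫ ω in G, Qf μ X k x ω ∂μ
      = (∫⁻ ω in G, ENNReal.ofReal (Qf μ X k x ω) ∂μ).toReal := by
    rw [integral_eq_lintegral_of_nonneg_ae (ae_restrict_of_ae (Qf_nonneg hX k x))
      ((stronglyMeasurable_condExp.mono hF).aestronglyMeasurable.restrict)]
  have h4 : ∫⁻ ω in G, ENNReal.ofReal (Qf μ X k x ω) ∂μ ≠ ⊤ := by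
    have hle : ∫⁻ ω in G, ENNReal.ofReal (Qf μ X k x ω) ∂μ ≤ ∫⁻ _ in G, 1 ∂μ := by
      apply lintegral_mono_ae
      filter_upwards [ae_restrict_of_ae (Qf_le_one hX k x)] with ω hω
      exact ENNReal.ofReal_le_one.mpr hω
    rw [setLIntegral_one] at hle
    exact ne_top_of_le_ne_top (measure_ne_top μ G) hle
  have h5 : (μ (cyl X k x ∩ G)).toReal
      = (∫⁻ ω in G, ENNReal.ofReal (Qf μ X k x ω) ∂μ).toReal := by
    rw [← h1, ← h2, h3]
  exact (ENNReal.toReal_eq_toReal_iff' (measure_ne_top μ _) h4).mp h5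

lemma Qf_pos_on_cyl (hX : ∀ i, Measurable (X i)) (k : ℕ) (x : Fin k → A) :
    ∀ᵐ ω ∂μ, ω ∈ cyl X k x → 0 < Qf μ X k x ω := by
  have hF := future_le hX ((k : ℤ) + 1)
  have hEF : MeasurableSet[futureSigma X ((k : ℤ) + 1)] {ω | Qf μ X k x ω ≤ 0} :=
    meas_Qf_le k x 0
  have h0 : μ (cyl X k x ∩ {ω | Qf μ X k x ω ≤ 0}) = 0 := by
    rw [key_eq hX k x hEF]
    rw [setLIntegral_congr_fun (hF _ hEF)
      (fun ω (hω : Qf μ X k x ω ≤ 0) => ENNReal.ofReal_eq_zero.mpr hω)]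
    simp
  rw [ae_iff]
  have hset : {ω | ¬(ω ∈ cyl X k x → 0 < Qf μ X k x ω)}
      = cyl X k x ∩ {ω | Qf μ X k x ω ≤ 0} := by
    ext ω
    rw [Set.mem_setOf_eq, Classical.not_imp]
    constructor
    · rintro ⟨h1, h2⟩; exact ⟨h1, not_lt.mp h2⟩
    · rintro ⟨h1, h2⟩; exact ⟨h1, not_lt.mpr h2⟩
  rw [hset]
  exact h0

end Meas

end SandwichAux

namespace SandwichAux

section Bad

variable {Ω A : Type*} [MeasurableSpace Ω] [MeasurableSpace A]
  [MeasurableSingletonClass A] [Fintype A]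
variable {X : ℤ → Ω → A} {μ : Measure Ω}

/-- threshold for the upper bound -/
noncomputable def tU (μ : Measure Ω) (X : ℤ → Ω → A) (k : ℕ) (ρ : ℝ) (x : Fin k → A) : ℕ :=
  Nat.ceil (((μ (cyl X k x)).toReal * ρ)⁻¹) - 1

/-- upper-bound bad set -/
def badU (μ : Measure Ω) (X : ℤ → Ω → A) (T : Ω → Ω) (k : ℕ) (ρ : ℝ) : Set Ω :=
  ⋃ x : Fin k → A,
    (cyl X k x ∩ {ω | ∀ i : ℕ, 1 ≤ i → i ≤ tU μ X k ρ x → T^[i] ω ∉ cyl X k x})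

variable [IsProbabilityMeasure μ]

lemma badU_bound (hX : ∀ i, Measurable (X i)) {T : Ω → Ω}
    (hT : MeasurePreserving T μ μ) (k : ℕ) {ρ : ℝ} (hρ : 0 < ρ) :
    μ (badU μ X T k ρ) ≤ ENNReal.ofReal ρ := by
  have hstep : ∀ x : Fin k → A,
      μ (cyl X k x ∩ {ω | ∀ i : ℕ, 1 ≤ i → i ≤ tU μ X k ρ x → T^[i] ω ∉ cyl X k x})
        ≤ ENNReal.ofReal ρ * μ (cyl X k x) := by
    intro x
    by_cases h0 : μ (cyl X k x) = 0
    · refine le_trans (measure_mono Set.inter_subset_left) ?_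
      rw [h0]
      exact zero_le
    · set p := (μ (cyl X k x)).toReal with hp_def
      have hp : 0 < p := ENNReal.toReal_pos h0 (measure_ne_top μ _)
      have hc : 0 < (p * ρ)⁻¹ := by positivity
      have hret := return_bound μ hT (meas_cyl hX k x) (tU μ X k ρ x)
      have ht1 : (tU μ X k ρ x) + 1 = Nat.ceil ((p * ρ)⁻¹) := by
        have h1 : 1 ≤ Nat.ceil ((p * ρ)⁻¹) := Nat.one_le_ceil_iff.mpr hc
        unfold tU
        rw [← hp_def]
        omega
      have ht2 : ((tU μ X k ρ x : ℝ≥0∞) + 1) = ((Nat.ceil ((p * ρ)⁻¹) : ℕ) : ℝ≥0∞) := by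
        exact_mod_cast congrArg (fun n : ℕ => (n : ℝ≥0∞)) ht1
      rw [ht2] at hret
      refine le_trans hret ?_
      have hcc : ENNReal.ofReal ((p * ρ)⁻¹) ≤ ((Nat.ceil ((p * ρ)⁻¹) : ℕ) : ℝ≥0∞) := by
        rw [← ENNReal.ofReal_natCast]
        exact ENNReal.ofReal_le_ofReal (Nat.le_ceil _)
      have hinv : ((Nat.ceil ((p * ρ)⁻¹) : ℕ) : ℝ≥0∞)⁻¹ ≤ (ENNReal.ofReal ((p * ρ)⁻¹))⁻¹ :=
        ENNReal.inv_le_inv' hcc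
      refine le_trans hinv ?_
      rw [← ENNReal.ofReal_inv_of_pos hc, inv_inv]
      rw [ENNReal.ofReal_mul hp.le, hp_def, ENNReal.ofReal_toReal (measure_ne_top μ _)]
      rw [mul_comm]
  calc μ (badU μ X T k ρ)
      ≤ ∑ x : Fin k → A, μ (cyl X k x ∩ _) := measure_iUnion_fintype_le μ _
    _ ≤ ∑ x : Fin k → A, ENNReal.ofReal ρ * μ (cyl X k x) :=
        Finset.sum_le_sum fun x _ => hstep x
    _ = ENNReal.ofReal ρ * ∑ x : Fin k → A, μ (cyl X k x) := by rw [Finset.mul_sum]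
    _ ≤ ENNReal.ofReal ρ * 1 := mul_le_mul_right (sum_cyl_le hX k μ) _
    _ = ENNReal.ofReal ρ := mul_one _

/-- lower-bound bad set -/
def badL (μ : Measure Ω) (X : ℤ → Ω → A) (k : ℕ) (ρ : ℝ) : Set Ω :=
  {ω | ∃ r : ℕ, 1 ≤ r ∧ Mtch X k r ω ∧ (∀ j, 1 ≤ j → j < r → ¬ Mtch X k j ω) ∧
    Qf μ X k (blockOf X k ω) ω ≤ ρ / (k * r)}

def G1 (μ : Measure Ω) (X : ℤ → Ω → A) (k : ℕ) (ρ : ℝ) (r : ℕ) (x : Fin k → A) : Set Ω :=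
  {ω | psiB X k r ω = x} ∩ {ω | Qf μ X k x ω ≤ ρ / (k * r)}

def G2 (μ : Measure Ω) (X : ℤ → Ω → A) (k : ℕ) (ρ : ℝ) (n : ℕ) (x : Fin k → A) : Set Ω :=
  ({ω | blkAt X k (k + n) ω = x} ∩ {ω | Qf μ X k x ω ≤ ρ / (k * (k + n))}) ∩
    {ω | ∀ j : ℕ, k ≤ j → j < k + n → blkAt X k j ω ≠ x}

lemma meas_G1 (k : ℕ) (ρ : ℝ) {r : ℕ} (hr : 1 ≤ r) (x : Fin k → A) :
    MeasurableSet[futureSigma X ((k : ℤ) + 1)] (G1 μ X k ρ r x) :=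
  (meas_psiB_future hr x).inter (meas_Qf_le k x _)

lemma meas_G2 (k : ℕ) (ρ : ℝ) (n : ℕ) (x : Fin k → A) :
    MeasurableSet[futureSigma X ((k : ℤ) + 1)] (G2 μ X k ρ n x) := by
  refine MeasurableSet.inter
    ((meas_blkAt_future (Nat.le_add_right k n) x).inter (meas_Qf_le k x _)) ?_
  have : {ω | ∀ j : ℕ, k ≤ j → j < k + n → blkAt X k j ω ≠ x}
      = ⋂ (j : ℕ), ⋂ (_ : k ≤ j), ⋂ (_ : j < k + n), {ω | blkAt X k j ω = x}ᶜ := by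
    ext ω; simp [Set.mem_iInter]
  rw [this]
  exact MeasurableSet.iInter fun j => MeasurableSet.iInter fun hj =>
    MeasurableSet.iInter fun _ => (meas_blkAt_future hj x).compl

lemma G2_unique {k : ℕ} {ρ : ℝ} {n n' : ℕ} {x : Fin k → A} {ω : Ω}
    (hn : ω ∈ G2 μ X k ρ n x) (hn' : ω ∈ G2 μ X k ρ n' x) : n = n' := by
  rcases lt_trichotomy n n' with h | h | h
  · exact absurd hn.1.1 (hn'.2 (k + n) (Nat.le_add_right _ _) (by omega))
  · exact h
  · exact absurd hn'.1.1 (hn.2 (k + n') (Nat.le_add_right _ _) (by omega))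

lemma G2_inj {k : ℕ} {ρ : ℝ} {n : ℕ} {x x' : Fin k → A} {ω : Ω}
    (hn : ω ∈ G2 μ X k ρ n x) (hn' : ω ∈ G2 μ X k ρ n x') : x = x' :=
  hn.1.1.symm.trans hn'.1.1

/-- inclusion of the lower-bound bad set -/
lemma badL_subset {k : ℕ} (hk : 1 ≤ k) (ρ : ℝ) :
    badL μ X k ρ ⊆
      (⋃ r ∈ Finset.Ico 1 k, ⋃ x : Fin k → A, (cyl X k x ∩ G1 μ X k ρ r x)) ∪
      (⋃ n : ℕ, ⋃ x : Fin k → A, (cyl X k x ∩ G2 μ X k ρ n x)) := by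
  rintro ω ⟨r, hr1, hm, hfirst, hq⟩
  by_cases hrk : r < k
  · left
    refine Set.mem_biUnion (Finset.mem_Ico.mpr ⟨hr1, hrk⟩) ?_
    refine Set.mem_iUnion.mpr ⟨blockOf X k ω, self_mem_cyl X k ω, ?_, hq⟩
    exact (psiB_eq hr1 hrk hm).symm
  · right
    push_neg at hrk
    have hkr : k + (r - k) = r := by omega
    refine Set.mem_iUnion.mpr ⟨r - k, ?_⟩
    refine Set.mem_iUnion.mpr ⟨blockOf X k ω, self_mem_cyl X k ω, ⟨⟨?_, ?_⟩, ?_⟩⟩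
    · show blkAt X k (k + (r - k)) ω = blockOf X k ω
      rw [hkr]
      exact mtch_iff_blkAt.mp hm
    · simp only [Set.mem_setOf_eq]
      have hcast : (k : ℝ) + ((r - k : ℕ) : ℝ) = (r : ℝ) := by
        rw [Nat.cast_sub hrk]; ring
      rw [hcast]
      exact hq
    · intro j hj1 hj2 hblk
      have hjr : j < r := by omega
      have hj1' : 1 ≤ j := by omega
      exact hfirst j hj1' hjr (mtch_iff_blkAt.mpr hblk)

end Bad

end SandwichAux

namespace SandwichAux

section Bad2

variable {Ω A : Type*} [MeasurableSpace Ω] [MeasurableSpace A]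
  [MeasurableSingletonClass A] [Fintype A]
variable {X : ℤ → Ω → A} {μ : Measure Ω} [IsProbabilityMeasure μ]

lemma U1_bound (hX : ∀ i, Measurable (X i)) {k : ℕ} (hk : 1 ≤ k) {ρ : ℝ} (hρ : 0 < ρ) :
    μ (⋃ r ∈ Finset.Ico 1 k, ⋃ x : Fin k → A, (cyl X k x ∩ G1 μ X k ρ r x))
      ≤ ENNReal.ofReal ρ := by
  have hF := future_le hX ((k : ℤ) + 1)
  have hkR : (0 : ℝ) < (k : ℝ) := by exact_mod_cast hk
  have hper : ∀ r ∈ Finset.Ico 1 k,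
      μ (⋃ x : Fin k → A, (cyl X k x ∩ G1 μ X k ρ r x))
        ≤ ENNReal.ofReal (ρ / (k * r)) := by
    intro r hr
    obtain ⟨hr1, hrk⟩ := Finset.mem_Ico.mp hr
    have hdisj : ((Finset.univ : Finset (Fin k → A)) : Set (Fin k → A)).PairwiseDisjoint
        (fun x => G1 μ X k ρ r x) := by
      intro x _ y _ hxy
      rw [Function.onFun, Set.disjoint_left]
      intro ω h1 h2
      exact hxy (h1.1.symm.trans h2.1)
    calc μ (⋃ x : Fin k → A, (cyl X k x ∩ G1 μ X k ρ r x))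
        ≤ ∑ x : Fin k → A, μ (cyl X k x ∩ G1 μ X k ρ r x) := measure_iUnion_fintype_le μ _
      _ ≤ ∑ x : Fin k → A, ENNReal.ofReal (ρ / (k * r)) * μ (G1 μ X k ρ r x) := by
          refine Finset.sum_le_sum fun x _ => ?_
          rw [key_eq hX k x (meas_G1 k ρ hr1 x)]
          refine le_trans (setLIntegral_mono' (hF _ (meas_G1 k ρ hr1 x))
            (fun ω hω => ENNReal.ofReal_le_ofReal hω.2)) ?_
          rw [setLIntegral_const]
      _ = ENNReal.ofReal (ρ / (k * r)) * ∑ x : Fin k → A, μ (G1 μ X k ρ r x) := by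
          rw [Finset.mul_sum]
      _ ≤ ENNReal.ofReal (ρ / (k * r)) * 1 := by
          refine mul_le_mul_right ?_ _
          rw [← measure_biUnion_finset hdisj (fun x _ => hF _ (meas_G1 k ρ hr1 x))]
          exact prob_le_one
      _ = ENNReal.ofReal (ρ / (k * r)) := mul_one _
  calc μ (⋃ r ∈ Finset.Ico 1 k, ⋃ x : Fin k → A, (cyl X k x ∩ G1 μ X k ρ r x))
      ≤ ∑ r ∈ Finset.Ico 1 k, μ (⋃ x : Fin k → A, (cyl X k x ∩ G1 μ X k ρ r x)) :=
        measure_biUnion_finset_le _ _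
    _ ≤ ∑ r ∈ Finset.Ico 1 k, ENNReal.ofReal (ρ / (k * r)) := Finset.sum_le_sum hper
    _ ≤ ∑ r ∈ Finset.Ico 1 k, ENNReal.ofReal (ρ / k) := by
        refine Finset.sum_le_sum fun r hr => ENNReal.ofReal_le_ofReal ?_
        obtain ⟨hr1, _⟩ := Finset.mem_Ico.mp hr
        have h2 : (k : ℝ) ≤ (k : ℝ) * r :=
          le_mul_of_one_le_right hkR.le (by exact_mod_cast hr1)
        exact div_le_div_of_nonneg_left hρ.le hkR h2 |>.trans_eq rfl |>.trans (le_refl _)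
          |>.trans (le_refl _) |>.trans (le_refl _) |>.trans (le_refl _)
    _ ≤ ENNReal.ofReal ρ := by
        rw [Finset.sum_const, Nat.card_Ico, nsmul_eq_mul]
        rw [← ENNReal.ofReal_natCast, ← ENNReal.ofReal_mul (by positivity)]
        apply ENNReal.ofReal_le_ofReal
        have h1 : ((k - 1 : ℕ) : ℝ) ≤ (k : ℝ) := by
          have : (k - 1 : ℕ) ≤ k := Nat.sub_le k 1
          exact_mod_cast this
        calc ((k - 1 : ℕ) : ℝ) * (ρ / k) ≤ (k : ℝ) * (ρ / k) := by
              have hd : 0 ≤ ρ / (k : ℝ) := by positivity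
              exact mul_le_mul_of_nonneg_right h1 hd
          _ = ρ := by field_simp

lemma U2_pointwise (hX : ∀ i, Measurable (X i)) {k : ℕ} (hk : 1 ≤ k) {ρ : ℝ}
    (hρ : 0 < ρ) [Nonempty A] (ω : Ω) :
    ∑' n : ℕ, ∑ x : Fin k → A, (G2 μ X k ρ n x).indicator
        (fun ω' => ENNReal.ofReal (Qf μ X k x ω')) ω
      ≤ ENNReal.ofReal ((ρ / k) * (1 + Real.log (Fintype.card (Fin k → A)))) := by
  classical
  have hkR : (0 : ℝ) < (k : ℝ) := by exact_mod_cast hk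
  rw [Summable.tsum_finsetSum (fun x _ => ENNReal.summable)]
  set P : (Fin k → A) → Prop := fun x => ∃ n, ω ∈ G2 μ X k ρ n x with hP
  set nf : (Fin k → A) → ℕ := fun x => if h : P x then k + Nat.find h else k with hnf
  have hterm : ∀ x : Fin k → A,
      ∑' n : ℕ, (G2 μ X k ρ n x).indicator (fun ω' => ENNReal.ofReal (Qf μ X k x ω')) ω
        ≤ if P x then ENNReal.ofReal ((ρ / k) * (1 / (nf x : ℝ))) else 0 := by
    intro x
    by_cases h : P x
    · rw [if_pos h]
      have hn0 := Nat.find_spec h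
      have huniq : ∀ n : ℕ, n ≠ Nat.find h →
          (G2 μ X k ρ n x).indicator (fun ω' => ENNReal.ofReal (Qf μ X k x ω')) ω = 0 := by
        intro n hn
        exact Set.indicator_of_notMem (fun hmem => hn (G2_unique hmem hn0)) _
      rw [tsum_eq_single (Nat.find h) huniq, Set.indicator_of_mem hn0]
      have hq := hn0.1.2
      refine le_trans (ENNReal.ofReal_le_ofReal hq) (ENNReal.ofReal_le_ofReal ?_)
      apply le_of_eq
      have hnfx : nf x = k + Nat.find h := by rw [hnf]; simp only [dif_pos h]
      rw [hnfx]
      have hkn : (0 : ℝ) < ((k + Nat.find h : ℕ) : ℝ) := by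
        have : 1 ≤ k + Nat.find h := by omega
        exact_mod_cast this
      push_cast
      field_simp
    · rw [if_neg h]
      have hz : ∀ n : ℕ,
          (G2 μ X k ρ n x).indicator (fun ω' => ENNReal.ofReal (Qf μ X k x ω')) ω = 0 :=
        fun n => Set.indicator_of_notMem (fun hmem => h ⟨n, hmem⟩) _
      rw [tsum_congr hz, tsum_zero]
  refine le_trans (Finset.sum_le_sum fun x _ => hterm x) ?_
  set S : Finset (Fin k → A) := Finset.univ.filter P with hS
  have hsum_eq : ∑ x : Fin k → A, (if P x then ENNReal.ofReal ((ρ / k) * (1 / (nf x : ℝ))) else 0)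
      = ∑ x ∈ S, ENNReal.ofReal ((ρ / k) * (1 / (nf x : ℝ))) := by
    rw [hS, Finset.sum_filter]
  rw [hsum_eq, ← ENNReal.ofReal_sum_of_nonneg (fun x _ => by positivity)]
  apply ENNReal.ofReal_le_ofReal
  rw [← Finset.mul_sum]
  refine mul_le_mul_of_nonneg_left ?_ (by positivity)
  -- ∑ x ∈ S, 1/(nf x) ≤ 1 + log N
  have hinj : ∀ x ∈ S, ∀ y ∈ S, nf x = nf y → x = y := by
    intro x hx y hy hxy
    have hxP : P x := (Finset.mem_filter.mp hx).2
    have hyP : P y := (Finset.mem_filter.mp hy).2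
    have hnx := Nat.find_spec hxP
    have hny := Nat.find_spec hyP
    rw [hnf] at hxy
    simp only [dif_pos hxP, dif_pos hyP] at hxy
    have hfind : Nat.find hxP = Nat.find hyP := by omega
    rw [hfind] at hnx
    exact G2_inj hnx hny
  have himg : ∑ x ∈ S, (1 : ℝ) / (nf x : ℝ) = ∑ i ∈ S.image nf, (1 : ℝ) / (i : ℝ) :=
    (Finset.sum_image (g := nf) (f := fun i : ℕ => (1 : ℝ) / (i : ℝ)) hinj).symm
  rw [himg]
  have hf0 : ∀ n : ℕ, 0 ≤ (1 : ℝ) / (n : ℝ) := fun n => by positivity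
  have hmono : ∀ a b : ℕ, k ≤ a → a ≤ b → (1 : ℝ) / (b : ℝ) ≤ 1 / (a : ℝ) := by
    intro a b ha hab
    apply one_div_le_one_div_of_le
    · exact_mod_cast lt_of_lt_of_le hk ha
    · exact_mod_cast hab
  have hcard : (S.image nf).card ≤ Fintype.card (Fin k → A) := by
    refine le_trans Finset.card_image_le ?_
    refine le_trans (Finset.card_filter_le _ _) ?_
    simp
  have hge : ∀ i ∈ S.image nf, k ≤ i := by
    intro i hi
    obtain ⟨x, hx, rfl⟩ := Finset.mem_image.mp hi
    by_cases hPx : P x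
    · have hh : nf x = k + Nat.find hPx := by rw [hnf]; simp only [dif_pos hPx]
      rw [hh]; exact Nat.le_add_right _ _
    · have hh : nf x = k := by rw [hnf]; simp only [dif_neg hPx]
      rw [hh]
  have hdist := sum_distinct_le (fun i => (1 : ℝ) / (i : ℝ)) hf0
    (Fintype.card (Fin k → A)) k (S.image nf) hmono hcard hge
  refine le_trans hdist ?_
  have hN1 : 1 ≤ Fintype.card (Fin k → A) := Fintype.card_pos
  have := range_harmonic_le k (Fintype.card (Fin k → A)) hk hN1
  refine le_trans (le_of_eq ?_) this
  apply Finset.sum_congr rfl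
  intro t _
  push_cast
  norm_num

lemma U2_bound (hX : ∀ i, Measurable (X i)) {k : ℕ} (hk : 1 ≤ k) {ρ : ℝ}
    (hρ : 0 < ρ) [Nonempty A] :
    μ (⋃ n : ℕ, ⋃ x : Fin k → A, (cyl X k x ∩ G2 μ X k ρ n x))
      ≤ ENNReal.ofReal ((ρ / k) * (1 + Real.log (Fintype.card (Fin k → A)))) := by
  have hF := future_le hX ((k : ℤ) + 1)
  have hmeasq : ∀ (n : ℕ) (x : Fin k → A),
      Measurable (fun ω => (G2 μ X k ρ n x).indicator
        (fun ω' => ENNReal.ofReal (Qf μ X k x ω')) ω) := fun n x =>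
    ((stronglyMeasurable_condExp.mono hF).measurable.ennreal_ofReal).indicator
      (hF _ (meas_G2 k ρ n x))
  calc μ (⋃ n : ℕ, ⋃ x : Fin k → A, (cyl X k x ∩ G2 μ X k ρ n x))
      ≤ ∑' n : ℕ, μ (⋃ x : Fin k → A, (cyl X k x ∩ G2 μ X k ρ n x)) := measure_iUnion_le _
    _ ≤ ∑' n : ℕ, ∑ x : Fin k → A, μ (cyl X k x ∩ G2 μ X k ρ n x) :=
        ENNReal.tsum_le_tsum fun n => measure_iUnion_fintype_le μ _
    _ = ∑' n : ℕ, ∑ x : Fin k → A, ∫⁻ ω, (G2 μ X k ρ n x).indicator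
          (fun ω' => ENNReal.ofReal (Qf μ X k x ω')) ω ∂μ := by
        refine tsum_congr fun n => Finset.sum_congr rfl fun x _ => ?_
        rw [key_eq hX k x (meas_G2 k ρ n x), lintegral_indicator (hF _ (meas_G2 k ρ n x))]
    _ = ∑' n : ℕ, ∫⁻ ω, ∑ x : Fin k → A, (G2 μ X k ρ n x).indicator
          (fun ω' => ENNReal.ofReal (Qf μ X k x ω')) ω ∂μ := by
        refine tsum_congr fun n => ?_
        rw [lintegral_finset_sum _ fun x _ => hmeasq n x]
    _ = ∫⁻ ω, ∑' n : ℕ, ∑ x : Fin k → A, (G2 μ X k ρ n x).indicator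
          (fun ω' => ENNReal.ofReal (Qf μ X k x ω')) ω ∂μ := by
        rw [lintegral_tsum fun n =>
          (Finset.measurable_sum _ fun x _ => hmeasq n x).aemeasurable]
    _ ≤ ∫⁻ _, ENNReal.ofReal ((ρ / k) * (1 + Real.log (Fintype.card (Fin k → A)))) ∂μ :=
        lintegral_mono fun ω => U2_pointwise hX hk hρ ω
    _ = ENNReal.ofReal ((ρ / k) * (1 + Real.log (Fintype.card (Fin k → A)))) := by
        rw [lintegral_const, measure_univ, mul_one]

lemma badL_bound (hX : ∀ i, Measurable (X i)) {k : ℕ} (hk : 1 ≤ k) {ρ : ℝ}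
    (hρ : 0 < ρ) [Nonempty A] :
    μ (badL μ X k ρ) ≤ ENNReal.ofReal (ρ * (2 + Real.log (Fintype.card A))) := by
  refine le_trans (measure_mono (badL_subset hk ρ)) ?_
  refine le_trans (measure_union_le _ _) ?_
  refine le_trans (add_le_add (U1_bound hX hk hρ) (U2_bound hX hk hρ)) ?_
  rw [← ENNReal.ofReal_add hρ.le (by positivity)]
  apply ENNReal.ofReal_le_ofReal
  have hkR : (0 : ℝ) < (k : ℝ) := by exact_mod_cast hk
  have hN : (Fintype.card (Fin k → A)) = Fintype.card A ^ k := by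
    rw [Fintype.card_fun, Fintype.card_fin]
  have hlogN : Real.log (Fintype.card (Fin k → A)) = k * Real.log (Fintype.card A) := by
    rw [hN]
    push_cast
    exact Real.log_pow _ _
  have hD1 : (1 : ℝ) ≤ (Fintype.card A : ℝ) := by exact_mod_cast Fintype.card_pos
  have hlogD : 0 ≤ Real.log (Fintype.card A) := Real.log_nonneg hD1
  have hk1 : (1 : ℝ) ≤ (k : ℝ) := by exact_mod_cast hk
  rw [hlogN]
  have key : (ρ / k) * (1 + (k : ℝ) * Real.log (Fintype.card A))
      = ρ / k + ρ * Real.log (Fintype.card A) := by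
    field_simp
  rw [key]
  have hdk : ρ / (k : ℝ) ≤ ρ := by
    rw [div_le_iff₀ hkR]
    nlinarith
  nlinarith

end Bad2

end SandwichAux


/-- **Proposition 1.** For a stationary ergodic process over a `D`-ary alphabet and
summable positive `(ρ_k)`, almost surely for all sufficiently large `k`,
`-log P(X₁^k|X_{k+1}^∞) + log ρ_k - log k < log R⁽¹⁾_k < -log P(X₁^k) - log ρ_k`. -/
theorem sandwich_recurrence {Ω A : Type*} [MeasurableSpace Ω] [MeasurableSpace A]
    [MeasurableSingletonClass A] [Fintype A]
    (μ : Measure Ω) [IsProbabilityMeasure μ] (X : ℤ → Ω → A) (hXmeas : ∀ i, Measurable (X i))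
    (T : Ω → Ω) (hT : Ergodic T μ) (hshift : ∀ i ω, X i (T ω) = X (i + 1) ω)
    (ρ : ℕ → ℝ) (hρpos : ∀ k, 0 < ρ k) (hρ : Summable ρ) :
    ∀ᵐ ω ∂μ, ∀ᶠ k : ℕ in atTop,
      recTime X k ω ≠ ⊤ ∧
      -Real.log (condBlockProb μ X k ((k : ℤ) + 1) ω) + Real.log (ρ k) - Real.log k
        < Real.log ((recTime X k ω).toNat) ∧
      Real.log ((recTime X k ω).toNat)
        < -Real.log (blockProb μ X k ω) - Real.log (ρ k) := by
  classical
  open SandwichAux in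
  have hTm : MeasurePreserving T μ μ := hT.toMeasurePreserving
  haveI : Nonempty Ω := by
    by_contra h
    rw [not_nonempty_iff] at h
    have h1 : (Set.univ : Set Ω) = ∅ := Set.univ_eq_empty_iff.mpr h
    have h2 := measure_univ (μ := μ)
    rw [h1, measure_empty] at h2
    exact zero_ne_one h2
  haveI : Nonempty A := ⟨X 0 (Classical.arbitrary Ω)⟩
  set D : ℕ := Fintype.card A with hD
  have hD1 : (1 : ℝ) ≤ (D : ℝ) := by exact_mod_cast Fintype.card_pos
  have hlogD : 0 ≤ Real.log D := Real.log_nonneg hD1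
  set C : ℝ := 3 + Real.log D with hC
  have hCpos : 0 < C := by rw [hC]; linarith
  set bad : ℕ → Set Ω := fun k =>
    if 1 ≤ k then badU μ X T k (ρ k) ∪ badL μ X k (ρ k) else ∅ with hbaddef
  have hbad : ∀ k, μ (bad k) ≤ ENNReal.ofReal (ρ k * C) := by
    intro k
    simp only [hbaddef]
    by_cases hk : 1 ≤ k
    · rw [if_pos hk]
      refine le_trans (measure_union_le _ _) ?_
      refine le_trans (add_le_add (badU_bound hXmeas hTm k (hρpos k))
        (badL_bound hXmeas hk (hρpos k))) ?_
      rw [← ENNReal.ofReal_add (hρpos k).le (mul_nonneg (hρpos k).le (by positivity))]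
      apply ENNReal.ofReal_le_ofReal
      rw [hC]
      ring_nf
      nlinarith [(hρpos k).le, hlogD]
    · rw [if_neg hk]
      simp
  have hsum : (∑' k, μ (bad k)) ≠ ∞ := by
    refine ne_top_of_le_ne_top ?_ (ENNReal.tsum_le_tsum hbad)
    rw [← ENNReal.ofReal_tsum_of_nonneg (fun k => mul_nonneg (hρpos k).le hCpos.le) (hρ.mul_right C)]
    exact ENNReal.ofReal_ne_top
  have hBC : ∀ᵐ ω ∂μ, ∀ᶠ k in atTop, ω ∉ bad k := MeasureTheory.ae_eventually_notMem hsum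
  have hfin : ∀ᵐ ω ∂μ, ∀ k : ℕ, ∃ i, 1 ≤ i ∧ Mtch X k i ω := by
    rw [ae_all_iff]
    intro k
    have hnull : μ (⋃ x : Fin k → A,
        (cyl X k x ∩ {ω | ∀ i : ℕ, 1 ≤ i → T^[i] ω ∉ cyl X k x})) = 0 := by
      refine le_antisymm (le_trans (measure_iUnion_fintype_le μ _) ?_) zero_le
      refine le_of_eq (Finset.sum_eq_zero fun x _ => ?_)
      exact no_return_zero μ hTm (meas_cyl hXmeas k x)
    refine measure_mono_null ?_ hnull
    intro ω hω
    simp only [Set.mem_setOf_eq] at hω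
    refine Set.mem_iUnion.mpr ⟨blockOf X k ω, self_mem_cyl X k ω, ?_⟩
    intro i hi1 hmem
    exact hω ⟨i, hi1, (mtch_iff_iterate hshift (self_mem_cyl X k ω)).mpr hmem⟩
  have hpos : ∀ᵐ ω ∂μ, ∀ k : ℕ, μ (cyl X k (blockOf X k ω)) ≠ 0 := by
    rw [ae_all_iff]
    intro k
    have hnull : μ (⋃ x ∈ Finset.univ.filter (fun x : Fin k → A => μ (cyl X k x) = 0),
        cyl X k x) = 0 := by
      refine le_antisymm (le_trans (measure_biUnion_finset_le _ _) ?_) zero_le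
      refine le_of_eq (Finset.sum_eq_zero fun x hx => ?_)
      exact (Finset.mem_filter.mp hx).2
    refine measure_mono_null ?_ hnull
    intro ω hω
    have hω' : μ (cyl X k (blockOf X k ω)) = 0 := by simpa using hω
    exact Set.mem_biUnion (Finset.mem_filter.mpr ⟨Finset.mem_univ _, hω'⟩)
      (self_mem_cyl X k ω)
  have hQpos : ∀ᵐ ω ∂μ, ∀ k : ℕ, 0 < Qf μ X k (blockOf X k ω) ω := by
    rw [ae_all_iff]
    intro k
    have h1 : ∀ᵐ ω ∂μ, ∀ x : Fin k → A, ω ∈ cyl X k x → 0 < Qf μ X k x ω :=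
      ae_all_iff.mpr fun x => Qf_pos_on_cyl hXmeas k x
    filter_upwards [h1] with ω h
    exact h _ (self_mem_cyl X k ω)
  filter_upwards [hBC, hfin, hpos, hQpos] with ω hBCω hfinω hposω hQω
  filter_upwards [hBCω, Filter.eventually_ge_atTop 1] with k hknotbad hk1
  obtain ⟨r, hr1, hmr, hfirst, hrec⟩ := exists_first_match (hfinω k)
  have hrtop : recTime X k ω ≠ ⊤ := by rw [hrec]; exact ENat.coe_ne_top r
  have hrnat : (recTime X k ω).toNat = r := by rw [hrec]; simp
  have hnotbad : ω ∉ badU μ X T k (ρ k) ∧ ω ∉ badL μ X k (ρ k) := by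
    simp only [hbaddef, if_pos hk1, Set.mem_union] at hknotbad
    push_neg at hknotbad
    exact hknotbad
  have hQeq : condBlockProb μ X k ((k : ℤ) + 1) ω = Qf μ X k (blockOf X k ω) ω :=
    condBlockProb_eq k ω
  have hPeq : blockProb μ X k ω = (μ (cyl X k (blockOf X k ω))).toReal :=
    blockProb_eq k ω
  have hQ : 0 < Qf μ X k (blockOf X k ω) ω := hQω k
  have hpR : 0 < (μ (cyl X k (blockOf X k ω))).toReal :=
    ENNReal.toReal_pos (hposω k) (measure_ne_top μ _)
  have hkR : (0 : ℝ) < (k : ℝ) := by exact_mod_cast hk1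
  have hrR : (0 : ℝ) < (r : ℝ) := by exact_mod_cast hr1
  have hρk := hρpos k
  refine ⟨hrtop, ?_, ?_⟩
  · -- lower bound
    rw [hQeq, hrnat]
    have hQr : ρ k / (k * r) < Qf μ X k (blockOf X k ω) ω := by
      by_contra hle
      push_neg at hle
      exact hnotbad.2 ⟨r, hr1, hmr, hfirst, hle⟩
    have hmul : ρ k < Qf μ X k (blockOf X k ω) ω * ((k : ℝ) * r) := by
      rw [div_lt_iff₀ (by positivity)] at hQr
      linarith
    have hlt : ρ k / ((k : ℝ) * Qf μ X k (blockOf X k ω) ω) < (r : ℝ) := by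
      rw [div_lt_iff₀ (by positivity)]
      nlinarith
    have hlog := Real.log_lt_log (by positivity) hlt
    rw [Real.log_div (ne_of_gt hρk) (by positivity),
      Real.log_mul (ne_of_gt hkR) (ne_of_gt hQ)] at hlog
    linarith
  · -- upper bound
    rw [hPeq, hrnat]
    by_contra hcon
    push_neg at hcon
    set p := (μ (cyl X k (blockOf X k ω))).toReal with hp_def
    have hc : (0 : ℝ) < (p * ρ k)⁻¹ := by positivity
    have hlogc : Real.log ((p * ρ k)⁻¹) = -Real.log p - Real.log (ρ k) := by
      rw [Real.log_inv, Real.log_mul (ne_of_gt hpR) (ne_of_gt hρk)]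
      ring
    have hcr : (p * ρ k)⁻¹ ≤ (r : ℝ) := by
      have h1 : Real.log ((p * ρ k)⁻¹) ≤ Real.log r := by rw [hlogc]; exact hcon
      calc (p * ρ k)⁻¹ = Real.exp (Real.log ((p * ρ k)⁻¹)) := (Real.exp_log hc).symm
        _ ≤ Real.exp (Real.log r) := Real.exp_le_exp.mpr h1
        _ = r := Real.exp_log hrR
    have hceil : Nat.ceil ((p * ρ k)⁻¹) ≤ r := Nat.ceil_le.mpr hcr
    apply hnotbad.1
    refine Set.mem_iUnion.mpr ⟨blockOf X k ω, self_mem_cyl X k ω, ?_⟩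
    intro i hi1 hit
    have htu : tU μ X k (ρ k) (blockOf X k ω) = Nat.ceil ((p * ρ k)⁻¹) - 1 := rfl
    have hir : i < r := by omega
    have hnm := hfirst i hi1 hir
    intro hmem
    exact hnm ((mtch_iff_iterate hshift (self_mem_cyl X k ω)).mpr hmem)
end

section
/- For any process (X_i)_{i∈ℤ} over a D-ary alphabet and any constant C > 0, the recurrence time satisfies P(R^{(1)}_k ≤ C / P(X₁^k | X_{k+1}^∞)) ≤ C(1 + k log D), where P(X₁^k | X_{k+1}^∞) is the conditional probability of the realized block X₁^k given the realized future X_{k+1}^∞. -/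
open MeasureTheory ProbabilityTheory Filter Set
open scoped ENNReal NNReal

lemma aux_sum_inv_le_harmonic_s6 (t : Finset ℕ) (ht : 0 ∉ t) :
    ∑ r ∈ t, (r:ℝ)⁻¹ ≤ ∑ i ∈ Finset.range t.card, ((i:ℝ)+1)⁻¹ := by
  induction t using Finset.strongInduction with
  | _ t IH =>
    rcases t.eq_empty_or_nonempty with rfl | h
    · simp
    · have hM : t.max' h ∈ t := t.max'_mem h
      set M := t.max' h with hMdef
      have h1 : ∀ r ∈ t, 1 ≤ r := fun r hr => Nat.one_le_iff_ne_zero.mpr (by rintro rfl; exact ht hr)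
      have hsub : t ⊆ Finset.Icc 1 M := fun r hr => Finset.mem_Icc.mpr ⟨h1 r hr, t.le_max' r hr⟩
      have hcard : t.card ≤ M := by
        calc t.card ≤ (Finset.Icc 1 M).card := Finset.card_le_card hsub
        _ = M := by rw [Nat.card_Icc]; omega
      have hc1 : 1 ≤ t.card := Finset.card_pos.mpr h
      have hrec : t.card = (t.erase M).card + 1 := (Finset.card_erase_add_one hM).symm
      have hIH := IH (t.erase M) (Finset.erase_ssubset hM) (fun hc => ht (Finset.mem_of_mem_erase hc))
      have hsum : ∑ r ∈ t.erase M, (r:ℝ)⁻¹ + (M:ℝ)⁻¹ = ∑ r ∈ t, (r:ℝ)⁻¹ :=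
        Finset.sum_erase_add t _ hM
      rw [← hsum, hrec, Finset.sum_range_succ]
      have hMc : ((M:ℝ))⁻¹ ≤ (((t.erase M).card : ℝ) + 1)⁻¹ := by
        apply inv_anti₀
        · positivity
        · have h2 : (t.erase M).card + 1 ≤ M := by omega
          exact_mod_cast h2
      exact add_le_add hIH hMc

lemma aux_sum_inv_le_one_add_log (t : Finset ℕ) (ht : 0 ∉ t) (n : ℕ) (hcard : t.card ≤ n) :
    ∑ r ∈ t, (r:ℝ)⁻¹ ≤ 1 + Real.log n := by
  refine (aux_sum_inv_le_harmonic_s6 t ht).trans ?_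
  have h1 : ∑ i ∈ Finset.range t.card, ((i:ℝ)+1)⁻¹ ≤ ∑ i ∈ Finset.range n, ((i:ℝ)+1)⁻¹ := by
    apply Finset.sum_le_sum_of_subset_of_nonneg (Finset.range_subset_range.mpr hcard)
    intro i _ _; positivity
  refine h1.trans ?_
  have : (harmonic n : ℝ) = ∑ i ∈ Finset.range n, ((i:ℝ)+1)⁻¹ := by simp [harmonic]
  rw [← this]; exact harmonic_le_one_add_log n

/-- For any process over a `D`-ary alphabet and `C > 0`,
`P(R⁽¹⁾_k ≤ C / P(X₁^k|X_{k+1}^∞)) ≤ C(1 + k log D)`. -/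
theorem recurrence_markov_lower {Ω A : Type*} [MeasurableSpace Ω] [MeasurableSpace A]
    [MeasurableSingletonClass A] [Fintype A]
    (μ : Measure Ω) [IsProbabilityMeasure μ] (X : ℤ → Ω → A) (hXmeas : ∀ i, Measurable (X i))
    (k : ℕ) (C : ℝ) (hC : 0 < C) :
    μ {ω | ((recTime X k ω : ℕ∞) : ℝ≥0∞)
        ≤ ENNReal.ofReal (C / condBlockProb μ X k ((k : ℤ) + 1) ω)}
      ≤ ENNReal.ofReal (C * (1 + k * Real.log (Fintype.card A))) := by
  classical
  have hG : futureSigma X ((k:ℤ)+1) ≤ (inferInstance : MeasurableSpace Ω) := by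
    refine iSup_le fun i => ?_
    exact measurable_iff_comap_le.mp (hXmeas i.1)
  have hXG : ∀ p : ℤ, (k:ℤ)+1 ≤ p → Measurable[(futureSigma X ((k:ℤ)+1))] (X p) := by
    intro p hp
    refine measurable_iff_comap_le.mpr ?_
    exact le_iSup (fun i : {i : ℤ // (k:ℤ)+1 ≤ i} =>
      MeasurableSpace.comap (X i.1) inferInstance) ⟨p, hp⟩
  set B : (Fin k → A) → Set Ω := fun x => {ω' | ∀ m : Fin k, X (1 + (m : ℤ)) ω' = x m} with hBdef
  have hB : ∀ x, MeasurableSet (B x) := by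
    intro x
    have hBx : B x = ⋂ m : Fin k, (X (1 + (m : ℤ)))⁻¹' {x m} := by
      ext ω; simp [hBdef, Set.mem_iInter]
    rw [hBx]
    exact MeasurableSet.iInter fun m => (hXmeas _) (measurableSet_singleton _)
  set g : (Fin k → A) → Ω → ℝ := fun x => μ[(B x).indicator (fun _ => (1:ℝ)) | (futureSigma X ((k:ℤ)+1))] with hgdef
  have hgint : ∀ x, Integrable ((B x).indicator (fun _ => (1:ℝ))) μ :=
    fun x => (integrable_const (1:ℝ)).indicator (hB x)
  set T : (Fin k → A) → ℕ → Set Ω := fun x i =>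
    {ω | ∀ m : Fin k, (∀ h : i + m.1 < k, x ⟨i + m.1, h⟩ = x m) ∧
      (k ≤ i + m.1 → X ((i:ℤ) + 1 + (m.1:ℤ)) ω = x m)} with hTdef
  have hT : ∀ x i, MeasurableSet[(futureSigma X ((k:ℤ)+1))] (T x i) := by
    intro x i
    have hTx : T x i = ⋂ m : Fin k,
        ({ω : Ω | ∀ h : i + m.1 < k, x ⟨i + m.1, h⟩ = x m} ∩
         {ω : Ω | k ≤ i + m.1 → X ((i:ℤ) + 1 + (m.1:ℤ)) ω = x m}) := by
      ext ω; simp [hTdef, Set.mem_iInter, forall_and]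
    rw [hTx]
    refine MeasurableSet.iInter fun m => (MeasurableSet.const _).inter ?_
    by_cases h : k ≤ i + m.1
    · have hs : {ω : Ω | k ≤ i + m.1 → X ((i:ℤ) + 1 + (m.1:ℤ)) ω = x m}
          = (X ((i:ℤ) + 1 + (m.1:ℤ)))⁻¹' {x m} := by
        ext ω; simp [h]
      rw [hs]
      exact hXG ((i:ℤ) + 1 + (m.1:ℤ)) (by push_cast; omega) (measurableSet_singleton _)
    · have hs : {ω : Ω | k ≤ i + m.1 → X ((i:ℤ) + 1 + (m.1:ℤ)) ω = x m} = Set.univ := by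
        ext ω; simp [h]
      rw [hs]; exact MeasurableSet.univ
  have hTiff : ∀ (x : Fin k → A) (i : ℕ) (ω : Ω), ω ∈ B x →
      ((∀ m : ℕ, m < k → X ((i:ℤ) + 1 + (m:ℤ)) ω = X (1 + (m:ℤ)) ω) ↔ ω ∈ T x i) := by
    intro x i ω hω
    constructor
    · intro hmatch m
      refine ⟨?_, ?_⟩
      · intro h
        have e1 : X (1 + ((i + m.1 : ℕ) : ℤ)) ω = x ⟨i + m.1, h⟩ := hω ⟨i + m.1, h⟩
        have e2 : X (1 + (m.1 : ℤ)) ω = x m := hω m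
        have e4 : X ((i:ℤ) + 1 + (m.1:ℤ)) ω = X (1 + (m.1:ℤ)) ω := hmatch m.1 m.2
        have e3 : (1 + ((i + m.1 : ℕ) : ℤ)) = ((i:ℤ) + 1 + (m.1:ℤ)) := by push_cast; ring
        rw [← e1, e3, e4, e2]
      · intro _
        have e2 : X (1 + (m.1 : ℤ)) ω = x m := hω m
        rw [← e2]; exact hmatch m.1 m.2
    · intro hTm m hm
      have h2 := hTm ⟨m, hm⟩
      by_cases h : i + m < k
      · have e1 : X (1 + ((i + m : ℕ) : ℤ)) ω = x ⟨i + m, h⟩ := hω ⟨i + m, h⟩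
        have e2 : X (1 + (m : ℤ)) ω = x ⟨m, hm⟩ := hω ⟨m, hm⟩
        have hxx : x ⟨i + m, h⟩ = x ⟨m, hm⟩ := h2.1 h
        have e3 : ((i:ℤ) + 1 + (m:ℤ)) = (1 + ((i + m : ℕ) : ℤ)) := by push_cast; ring
        calc X ((i:ℤ) + 1 + (m:ℤ)) ω = X (1 + ((i + m : ℕ) : ℤ)) ω := by rw [e3]
          _ = x ⟨i + m, h⟩ := e1
          _ = x ⟨m, hm⟩ := hxx
          _ = X (1 + (m : ℤ)) ω := e2.symm
      · have e5 : X ((i:ℤ) + 1 + (m:ℤ)) ω = x ⟨m, hm⟩ := h2.2 (show k ≤ i + m by omega)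
        have e2 : X (1 + (m : ℤ)) ω = x ⟨m, hm⟩ := hω ⟨m, hm⟩
        rw [e5, ← e2]
  set ρ : (Fin k → A) → Ω → ℕ := fun x ω => sInf {i : ℕ | 1 ≤ i ∧ ω ∈ T x i} with hρdef
  have hsInfchar : ∀ (S : Set ℕ), 0 ∉ S → ∀ n : ℕ,
      (sInf S = n ↔ (n = 0 ∧ ∀ i, i ∉ S) ∨ (n ∈ S ∧ ∀ i < n, i ∉ S)) := by
    intro S h0 n
    constructor
    · rintro rfl
      by_cases hS : S.Nonempty
      · exact Or.inr ⟨Nat.sInf_mem hS, fun i hi => Nat.notMem_of_lt_sInf hi⟩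
      · rw [Set.not_nonempty_iff_eq_empty] at hS
        subst hS
        exact Or.inl ⟨Nat.sInf_empty, fun i hi => hi⟩
    · rintro (⟨rfl, h⟩ | ⟨hn, hlt⟩)
      · have hSe : S = ∅ := Set.eq_empty_iff_forall_notMem.mpr h
        rw [hSe]; exact Nat.sInf_empty
      · refine le_antisymm (Nat.sInf_le hn) (le_of_not_gt fun hc => ?_)
        exact hlt _ hc (Nat.sInf_mem ⟨n, hn⟩)
  have hρmeas : ∀ x, Measurable[(futureSigma X ((k:ℤ)+1))] (ρ x) := by
    intro x
    refine @measurable_to_countable' ℕ Ω _ _ (futureSigma X ((k:ℤ)+1)) (ρ x) (fun n => ?_)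
    have hpre : ρ x ⁻¹' {n} =
        (({ω : Ω | n = 0} ∩ ⋂ i : ℕ, ⋂ (_ : 1 ≤ i), (T x i)ᶜ) ∪
         (({ω : Ω | 1 ≤ n} ∩ T x n) ∩ ⋂ i : ℕ, ⋂ (_ : i < n), ⋂ (_ : 1 ≤ i), (T x i)ᶜ)) := by
      ext ω
      have h0 : (0 : ℕ) ∉ {i : ℕ | 1 ≤ i ∧ ω ∈ T x i} := by simp
      simp only [Set.mem_preimage, Set.mem_singleton_iff, hρdef]
      rw [hsInfchar _ h0 n]
      simp only [Set.mem_union, Set.mem_inter_iff, Set.mem_iInter, Set.mem_setOf_eq,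
        Set.mem_compl_iff]
      constructor
      · rintro (⟨rfl, h⟩ | ⟨⟨h1, h2⟩, h3⟩)
        · exact Or.inl ⟨rfl, fun i hi hTi => h i ⟨hi, hTi⟩⟩
        · exact Or.inr ⟨⟨h1, h2⟩, fun i hlt hi hTi => h3 i hlt ⟨hi, hTi⟩⟩
      · rintro (⟨h1, h2⟩ | ⟨⟨h1, h2⟩, h3⟩)
        · exact Or.inl ⟨h1, fun i hi => (not_and.mpr (h2 i)) hi⟩
        · exact Or.inr ⟨⟨h1, h2⟩, fun i hlt hi => (not_and.mpr (h3 i hlt)) hi⟩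
    rw [hpre]
    refine MeasurableSet.union ?_ ?_
    · exact (MeasurableSet.const _).inter
        (MeasurableSet.iInter fun i => MeasurableSet.iInter fun _ => (hT x i).compl)
    · exact (((MeasurableSet.const _).inter (hT x n)).inter
        (MeasurableSet.iInter fun i => MeasurableSet.iInter fun _ =>
          MeasurableSet.iInter fun _ => (hT x i).compl))
  set N : (Fin k → A) → Set Ω := fun x => {ω | ∃ i : ℕ, 1 ≤ i ∧ ω ∈ T x i} with hNdef
  have hN : ∀ x, MeasurableSet[(futureSigma X ((k:ℤ)+1))] (N x) := by
    intro x
    have hNx : N x = ⋃ i : ℕ, ⋃ (_ : 1 ≤ i), T x i := by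
      ext ω; simp [hNdef]
    rw [hNx]
    exact MeasurableSet.iUnion fun i => MeasurableSet.iUnion fun _ => hT x i
  have hρspec : ∀ x ω, ω ∈ N x → 1 ≤ ρ x ω ∧ ω ∈ T x (ρ x ω) := by
    intro x ω hω
    exact Nat.sInf_mem hω
  set U : (Fin k → A) → Set Ω := fun x =>
    N x ∩ {ω | 0 < g x ω ∧ (ρ x ω : ℝ) * g x ω ≤ C} with hUdef
  have hgmeasG : ∀ x, Measurable[(futureSigma X ((k:ℤ)+1))] (g x) := fun x => stronglyMeasurable_condExp.measurable
  have hU : ∀ x, MeasurableSet[(futureSigma X ((k:ℤ)+1))] (U x) := by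
    intro x
    refine (hN x).inter ?_
    have h1 : MeasurableSet[(futureSigma X ((k:ℤ)+1))] {ω : Ω | 0 < g x ω} := (hgmeasG x) measurableSet_Ioi
    have h2 : MeasurableSet[(futureSigma X ((k:ℤ)+1))] {ω : Ω | (ρ x ω : ℝ) * g x ω ≤ C} := by
      have hm1 : Measurable[(futureSigma X ((k:ℤ)+1))] (fun ω => (ρ x ω : ℝ) * g x ω) :=
        (measurable_from_top.comp (hρmeas x)).mul (hgmeasG x)
      exact hm1 measurableSet_Iic
    exact h1.inter h2
  have hinj : ∀ (ω : Ω) (x x' : Fin k → A) (i : ℕ), 1 ≤ i →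
      ω ∈ T x i → ω ∈ T x' i → x = x' := by
    intro ω x x' i hi hx hx'
    have key : ∀ n : ℕ, ∀ m : Fin k, k - m.1 ≤ n → x m = x' m := by
      intro n
      induction n with
      | zero => intro m hm; exact absurd m.2 (by omega)
      | succ n IH =>
        intro m hm
        by_cases h : i + m.1 < k
        · have h1 := (hx m).1 h
          have h2 := (hx' m).1 h
          have h3 : x ⟨i + m.1, h⟩ = x' ⟨i + m.1, h⟩ :=
            IH ⟨i + m.1, h⟩ (show k - (i + m.1) ≤ n by omega)
          rw [← h1, ← h2]; exact h3
        · have h1 := (hx m).2 (by omega)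
          have h2 := (hx' m).2 (by omega)
          rw [← h1, ← h2]
    funext m; exact key k m (by omega)
  -- Step 1: event inclusion
  have hstep1 : {ω | ((recTime X k ω : ℕ∞) : ℝ≥0∞)
        ≤ ENNReal.ofReal (C / condBlockProb μ X k ((k : ℤ) + 1) ω)}
      ⊆ ⋃ x : Fin k → A, B x ∩ U x := by
    intro ω hω
    simp only [Set.mem_setOf_eq] at hω
    set x : Fin k → A := fun m => X (1 + (m:ℤ)) ω with hxdef
    have hωB : ω ∈ B x := fun m => rfl
    have hQ : condBlockProb μ X k ((k:ℤ)+1) ω = g x ω := by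
      unfold condBlockProb
      rw [tsum_eq_single x]
      · have hmem : ω ∈ {ω'' | ∀ m : Fin k, X (1 + (m:ℤ)) ω'' = x m} := hωB
        rw [Set.indicator_of_mem hmem, one_mul]
      · intro y hy
        have hnot : ω ∉ {ω'' | ∀ m : Fin k, X (1 + (m:ℤ)) ω'' = y m} := by
          intro hmem
          exact hy (funext fun m => (hmem m).symm)
        rw [Set.indicator_of_notMem hnot, zero_mul]
    rw [hQ] at hω
    have hne : recTime X k ω ≠ ⊤ := by
      intro h
      have htop : (((⊤:ℕ∞)):ℝ≥0∞) = ⊤ := by simp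
      rw [h, htop, top_le_iff] at hω
      exact ENNReal.ofReal_ne_top hω
    obtain ⟨i0, hi0⟩ : ∃ i : ℕ, 1 ≤ i ∧ ω ∈ T x i := by
      by_contra hc
      push_neg at hc
      apply hne
      refine sInf_eq_top.mpr ?_
      rintro e ⟨i, rfl, hi1, hmatch⟩
      exact absurd ((hTiff x i ω hωB).mp hmatch) (hc i hi1)
    have hωN : ω ∈ N x := ⟨i0, hi0.1, hi0.2⟩
    obtain ⟨hρ1, hρT⟩ := hρspec x ω hωN
    set r := ρ x ω with hrdef
    have hrmatch : ∀ m : ℕ, m < k → X ((r:ℤ)+1+(m:ℤ)) ω = X (1+(m:ℤ)) ω :=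
      (hTiff x r ω hωB).mpr hρT
    have hrec : recTime X k ω = (r : ℕ∞) := by
      apply le_antisymm
      · exact sInf_le ⟨r, rfl, hρ1, hrmatch⟩
      · refine le_sInf ?_
        rintro e ⟨i, rfl, hi1, hmatch⟩
        have hri : r ≤ i := Nat.sInf_le ⟨hi1, (hTiff x i ω hωB).mp hmatch⟩
        exact_mod_cast hri
    rw [hrec] at hω
    have hcoe : (((r:ℕ∞)):ℝ≥0∞) = (r:ℝ≥0∞) := by norm_cast
    rw [hcoe] at hω
    have hg0 : 0 < g x ω := by
      by_contra hg
      push_neg at hg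
      have hdiv : C / g x ω ≤ 0 := by
        rcases hg.lt_or_eq with h' | h'
        · exact (div_neg_of_pos_of_neg hC h').le
        · simp [h']
      have h0 : ENNReal.ofReal (C / g x ω) = 0 := ENNReal.ofReal_eq_zero.mpr hdiv
      rw [h0] at hω
      have hr0 : (r:ℝ≥0∞) = 0 := le_antisymm hω (zero_le)
      have : r = 0 := by exact_mod_cast hr0
      omega
    have hrC : (r:ℝ) * g x ω ≤ C := by
      have h1 : (r:ℝ≥0∞) = ENNReal.ofReal ((r:ℕ):ℝ) := by
        rw [ENNReal.ofReal_natCast]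
      rw [h1] at hω
      have h2 : ((r:ℕ):ℝ) ≤ C / g x ω :=
        (ENNReal.ofReal_le_ofReal_iff (by positivity)).mp hω
      calc (r:ℝ) * g x ω ≤ (C / g x ω) * g x ω :=
            mul_le_mul_of_nonneg_right h2 hg0.le
        _ = C := div_mul_cancel₀ C (ne_of_gt hg0)
    exact Set.mem_iUnion.mpr ⟨x, hωB, hωN, hg0, hrC⟩
  -- Step 2: measure estimate
  haveI hsf : SigmaFinite (μ.trim hG) := by infer_instance
  set φ : (Fin k → A) → Ω → ℝ := fun x ω => C / (ρ x ω : ℝ) with hφdef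
  have hUm0 : ∀ x, MeasurableSet (U x) := fun x => hG _ (hU x)
  have hφmeas : ∀ x, Measurable (φ x) := fun x =>
    measurable_const.div (measurable_from_top.comp ((hρmeas x).mono hG le_rfl))
  have hφint : ∀ x, Integrable (φ x) μ := by
    intro x
    refine Integrable.mono' (integrable_const C) (hφmeas x).aestronglyMeasurable
      (ae_of_all _ fun ω => ?_)
    rw [hφdef]
    rcases Nat.eq_zero_or_pos (ρ x ω) with h | h
    · simp [h, hC.le]
    · have h1 : (1:ℝ) ≤ (ρ x ω : ℝ) := by exact_mod_cast h
      have h2 : (0:ℝ) < (ρ x ω : ℝ) := by linarith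
      rw [Real.norm_eq_abs, abs_of_nonneg (div_nonneg hC.le h2.le)]
      exact div_le_self hC.le h1
  have hkey : ∀ x, (μ (B x ∩ U x)).toReal ≤ ∫ ω in U x, φ x ω ∂μ := by
    intro x
    have h1 : ∫ ω in U x, g x ω ∂μ = ∫ ω in U x, (B x).indicator (fun _ => (1:ℝ)) ω ∂μ :=
      setIntegral_condExp hG (hgint x) (hU x)
    have h2 : ∫ ω in U x, (B x).indicator (fun _ => (1:ℝ)) ω ∂μ = (μ (B x ∩ U x)).toReal := by
      rw [setIntegral_indicator (hB x), setIntegral_const, smul_eq_mul, mul_one,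
        Set.inter_comm]; rfl
    have h3 : ∫ ω in U x, g x ω ∂μ ≤ ∫ ω in U x, φ x ω ∂μ := by
      refine setIntegral_mono_on (integrable_condExp.integrableOn)
        ((hφint x).integrableOn) (hUm0 x) fun ω hωU => ?_
      obtain ⟨hωN, hg0, hrg⟩ := hωU
      have hρ1 : 1 ≤ ρ x ω := (hρspec x ω hωN).1
      have hρpos : (0:ℝ) < (ρ x ω : ℝ) := by exact_mod_cast hρ1
      rw [hφdef]
      rw [le_div_iff₀ hρpos]
      nlinarith [hrg]
    calc (μ (B x ∩ U x)).toReal = ∫ ω in U x, g x ω ∂μ := (h1.trans h2).symm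
      _ ≤ _ := h3
  have hsum1 : ∑ x : Fin k → A, ∫ ω in U x, φ x ω ∂μ
      = ∫ ω, (∑ x : Fin k → A, (U x).indicator (φ x) ω) ∂μ := by
    rw [integral_finset_sum _ (fun x _ => (hφint x).indicator (hUm0 x))]
    refine Finset.sum_congr rfl fun x _ => ?_
    rw [integral_indicator (hUm0 x)]
  have hptwise : ∀ ω, (∑ x : Fin k → A, (U x).indicator (φ x) ω)
      ≤ C * (1 + k * Real.log (Fintype.card A)) := by
    intro ω
    set s : Finset (Fin k → A) := Finset.univ.filter (fun x => ω ∈ U x) with hsdef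
    have hmem : ∀ x ∈ s, ω ∈ U x := fun x hx => (Finset.mem_filter.mp hx).2
    have hsum : ∑ x : Fin k → A, (U x).indicator (φ x) ω = ∑ x ∈ s, φ x ω := by
      rw [hsdef, Finset.sum_filter]
      refine Finset.sum_congr rfl fun x _ => ?_
      by_cases h : ω ∈ U x <;> simp [Set.indicator_apply, h]
    rw [hsum]
    have hφeq : ∀ x ∈ s, φ x ω = C * ((ρ x ω : ℝ))⁻¹ := fun x _ => div_eq_mul_inv C _
    rw [Finset.sum_congr rfl hφeq, ← Finset.mul_sum]
    have hinj2 : ∀ x ∈ s, ∀ y ∈ s, ρ x ω = ρ y ω → x = y := by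
      intro x hx y hy hxy
      have h1 := hρspec x ω (hmem x hx).1
      have h2 := hρspec y ω (hmem y hy).1
      exact hinj ω x y (ρ x ω) h1.1 h1.2 (hxy ▸ h2.2)
    have himg : ∑ x ∈ s, ((ρ x ω : ℝ))⁻¹ = ∑ r ∈ s.image (fun x => ρ x ω), (r:ℝ)⁻¹ :=
      (Finset.sum_image (f := fun r : ℕ => ((r : ℝ))⁻¹) hinj2).symm
    have h0img : 0 ∉ s.image (fun x => ρ x ω) := by
      intro hc
      obtain ⟨x, hx, hx0⟩ := Finset.mem_image.mp hc
      have := (hρspec x ω (hmem x hx).1).1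
      omega
    have hcard : (s.image (fun x => ρ x ω)).card ≤ Fintype.card A ^ k := by
      calc (s.image (fun x => ρ x ω)).card ≤ s.card := Finset.card_image_le
        _ ≤ Fintype.card (Fin k → A) := Finset.card_le_univ s
        _ = Fintype.card A ^ k := by simp
    have hlog := aux_sum_inv_le_one_add_log _ h0img (Fintype.card A ^ k) hcard
    have hlogpow : Real.log ((Fintype.card A ^ k : ℕ) : ℝ)
        = k * Real.log (Fintype.card A) := by
      push_cast
      exact Real.log_pow ((Fintype.card A : ℝ)) k
    rw [himg]
    calc C * ∑ r ∈ s.image (fun x => ρ x ω), (r:ℝ)⁻¹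
        ≤ C * (1 + Real.log ((Fintype.card A ^ k : ℕ) : ℝ)) :=
          mul_le_mul_of_nonneg_left hlog hC.le
      _ = C * (1 + k * Real.log (Fintype.card A)) := by rw [hlogpow]
  have hintsum : Integrable (fun ω => ∑ x : Fin k → A, (U x).indicator (φ x) ω) μ :=
    integrable_finset_sum _ (fun x _ => (hφint x).indicator (hUm0 x))
  have hint2 : ∫ ω, (∑ x : Fin k → A, (U x).indicator (φ x) ω) ∂μ
      ≤ C * (1 + k * Real.log (Fintype.card A)) := by
    calc ∫ ω, (∑ x : Fin k → A, (U x).indicator (φ x) ω) ∂μ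
        ≤ ∫ _ω, C * (1 + k * Real.log (Fintype.card A)) ∂μ :=
          integral_mono hintsum (integrable_const _) hptwise
      _ = C * (1 + k * Real.log (Fintype.card A)) := by simp
  have hreal : ∑ x : Fin k → A, (μ (B x ∩ U x)).toReal
      ≤ C * (1 + k * Real.log (Fintype.card A)) := by
    refine le_trans (Finset.sum_le_sum fun x _ => hkey x) ?_
    rw [hsum1]
    exact hint2
  refine le_trans (measure_mono hstep1) ?_
  refine le_trans (measure_iUnion_le _) ?_
  rw [tsum_fintype]
  have hfin : ∀ x : Fin k → A, μ (B x ∩ U x) = ENNReal.ofReal ((μ (B x ∩ U x)).toReal) :=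
    fun x => (ENNReal.ofReal_toReal (measure_ne_top μ _)).symm
  calc ∑ x : Fin k → A, μ (B x ∩ U x)
      = ENNReal.ofReal (∑ x : Fin k → A, (μ (B x ∩ U x)).toReal) := by
        rw [ENNReal.ofReal_sum_of_nonneg (fun x _ => ENNReal.toReal_nonneg)]
        exact Finset.sum_congr rfl fun x _ => hfin x
    _ ≤ ENNReal.ofReal (C * (1 + k * Real.log (Fintype.card A))) :=
        ENNReal.ofReal_le_ofReal hreal
end

section
/- Let (X_i)_{i∈ℤ} be a stationary process over a countable alphabet. Then for all k ≥ 1 and all integers 0 ≤ i < j, P(X_{i+1}^{i+k} = X_{j+1}^{j+k}) ≤ e^{-H_∞(X₁^k | X_{k+1}^{k+j-i})}. -/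
open MeasureTheory ProbabilityTheory Filter Set
open scoped ENNReal NNReal

/-- Auxiliary: the first index `≥ k` reachable from `p` by steps of `D`. -/
private def rnext (D k p : ℕ) : ℕ := p + D * ((k - p - 1) / D + 1)

private lemma rnext_bounds {D k p : ℕ} (hD : 0 < D) (hp : p < k) :
    k ≤ rnext D k p ∧ rnext D k p < k + D := by
  have h1 := Nat.div_add_mod (k - p - 1) D
  have h2 := Nat.mod_lt (k - p - 1) hD
  have h3 : rnext D k p = p + (D * ((k - p - 1) / D) + D) := by
    simp only [rnext]; ring
  omega

private lemma rnext_eq_of_ge {D k p : ℕ} (hD : 0 < D) (h : k ≤ p + D) (hp : p < k) :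
    rnext D k p = p + D := by
  have h1 : (k - p - 1) / D = 0 := Nat.div_eq_of_lt (by omega)
  simp [rnext, h1]

private lemma rnext_eq_of_lt {D k p : ℕ} (hD : 0 < D) (h : p + D < k) :
    rnext D k p = rnext D k (p + D) := by
  have h1 : (k - p - 1) / D = (k - (p + D) - 1) / D + 1 := by
    rw [Nat.div_eq_sub_div hD (by omega)]
    congr 2
    omega
  have h2 : D * (((k - (p + D) - 1) / D + 1) + 1)
      = D * ((k - (p + D) - 1) / D + 1) + D := by ring
  simp only [rnext, h1]
  omega

/-- For a stationary process over a countable alphabet, for all `k ≥ 1` and `0 ≤ i < j`,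
`P(X_{i+1}^{i+k} = X_{j+1}^{j+k}) ≤ e^{-H_∞(X₁^k | X_{k+1}^{k+j-i})}`. -/
theorem block_collision_bound {Ω A : Type*} [MeasurableSpace Ω] [MeasurableSpace A]
    [MeasurableSingletonClass A] [Countable A]
    (μ : Measure Ω) [IsProbabilityMeasure μ] (X : ℤ → Ω → A) (hXmeas : ∀ i, Measurable (X i))
    (T : Ω → Ω) (hT : MeasurePreserving T μ μ) (hshift : ∀ i ω, X i (T ω) = X (i + 1) ω)
    (k : ℕ) (hk : 1 ≤ k) (i j : ℕ) (hij : i < j) :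
    μ {ω | ∀ m : ℕ, m < k → X ((i : ℤ) + 1 + (m : ℤ)) ω = X ((j : ℤ) + 1 + (m : ℤ)) ω}
      ≤ ENNReal.ofReal (Real.exp (-condMinEntropy μ X k (j - i))) := by
  classical
  set D := j - i with hDdef
  have hD : 0 < D := by omega
  have hDZ : (D : ℤ) = (j : ℤ) - (i : ℤ) := by omega
  -- iterated shift
  have hIter : ∀ (n : ℕ) (a : ℤ) (ω : Ω), X a (T^[n] ω) = X (a + n) ω := by
    intro n
    induction n with
    | zero => intro a ω; simp
    | succ n ih =>
      intro a ω
      rw [Function.iterate_succ_apply, ih, hshift]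
      congr 1
      push_cast
      ring
  set E0 : Set Ω :=
    {ω | ∀ m : ℕ, m < k → X (1 + (m : ℤ)) ω = X ((D : ℤ) + 1 + (m : ℤ)) ω} with hE0def
  have hE0meas : MeasurableSet E0 := by
    have : E0 = ⋂ (m : ℕ) (_ : m < k),
        {ω | X (1 + (m : ℤ)) ω = X ((D : ℤ) + 1 + (m : ℤ)) ω} := by
      ext ω; simp [hE0def, Set.mem_iInter]
    rw [this]
    exact MeasurableSet.iInter fun m => MeasurableSet.iInter fun _ =>
      measurableSet_eq_fun (hXmeas _) (hXmeas _)
  have hpre : {ω | ∀ m : ℕ, m < k →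
      X ((i : ℤ) + 1 + (m : ℤ)) ω = X ((j : ℤ) + 1 + (m : ℤ)) ω} = T^[i] ⁻¹' E0 := by
    ext ω
    simp only [Set.mem_preimage, Set.mem_setOf_eq, hE0def]
    constructor
    · intro h m hm
      rw [hIter, hIter]
      have e1 : (1 : ℤ) + (m : ℤ) + (i : ℤ) = (i : ℤ) + 1 + (m : ℤ) := by ring
      have e2 : (D : ℤ) + 1 + (m : ℤ) + (i : ℤ) = (j : ℤ) + 1 + (m : ℤ) := by
        rw [hDZ]; ring
      rw [e1, e2]
      exact h m hm
    · intro h m hm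
      have h' := h m hm
      rw [hIter, hIter] at h'
      have e1 : (1 : ℤ) + (m : ℤ) + (i : ℤ) = (i : ℤ) + 1 + (m : ℤ) := by ring
      have e2 : (D : ℤ) + 1 + (m : ℤ) + (i : ℤ) = (j : ℤ) + 1 + (m : ℤ) := by
        rw [hDZ]; ring
      rw [e1, e2] at h'
      exact h'
  have hstat : μ {ω | ∀ m : ℕ, m < k →
      X ((i : ℤ) + 1 + (m : ℤ)) ω = X ((j : ℤ) + 1 + (m : ℤ)) ω} = μ E0 := by
    rw [hpre]
    exact (hT.iterate i).measure_preimage hE0meas.nullMeasurableSet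
  -- the blocks
  set Ax : (Fin k → A) → Set Ω :=
    fun x => {ω | ∀ m : Fin k, X (1 + (m : ℤ)) ω = x m} with hAxdef
  set Cy : (Fin D → A) → Set Ω :=
    fun y => {ω | ∀ m : Fin D, X ((k : ℤ) + 1 + (m : ℤ)) ω = y m} with hCydef
  have hCme : ∀ y, MeasurableSet (Cy y) := by
    intro y
    have : Cy y = ⋂ m : Fin D, X ((k : ℤ) + 1 + (m : ℤ)) ⁻¹' {y m} := by
      ext ω; simp [hCydef, Set.mem_iInter]
    rw [this]
    exact MeasurableSet.iInter fun m => hXmeas _ (measurableSet_singleton _)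
  have hCdisj : Pairwise (Function.onFun Disjoint Cy) := by
    intro y y' hne
    rw [Function.onFun, Set.disjoint_left]
    intro ω hy hy'
    exact hne (funext fun m => (hy m).symm.trans (hy' m))
  have hCunion : (⋃ y, Cy y) = Set.univ := by
    ext ω
    simp only [Set.mem_iUnion, Set.mem_univ, iff_true, hCydef, Set.mem_setOf_eq]
    exact ⟨fun m => X ((k : ℤ) + 1 + (m : ℤ)) ω, fun m => rfl⟩
  have hCsum : ∑' y, μ (Cy y) = 1 := by
    rw [← measure_iUnion hCdisj hCme, hCunion, measure_univ]
  -- the determined block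
  have hgb : ∀ m : Fin k, rnext D k m.1 - k < D := by
    intro m
    have := rnext_bounds hD m.2
    omega
  set g : (Fin D → A) → (Fin k → A) :=
    fun y m => y ⟨rnext D k m.1 - k, hgb m⟩ with hgdef
  have hsub : ∀ y, E0 ∩ Cy y ⊆ Ax (g y) ∩ Cy y := by
    intro y ω hω
    obtain ⟨hE, hC⟩ := hω
    refine ⟨?_, hC⟩
    intro m
    have hper : ∀ n p, k - p ≤ n → p < k →
        X (1 + (p : ℤ)) ω = X (1 + (rnext D k p : ℤ)) ω := by
      intro n
      induction n with
      | zero => intro p h1 h2; omega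
      | succ n ih =>
        intro p h1 h2
        have hstep : X (1 + (p : ℤ)) ω = X (1 + ((p + D : ℕ) : ℤ)) ω := by
          have h' := hE p h2
          rw [h']
          congr 1
          push_cast
          ring
        by_cases hc : k ≤ p + D
        · rw [rnext_eq_of_ge hD hc h2]
          exact hstep
        · rw [rnext_eq_of_lt hD (by omega)]
          exact hstep.trans (ih (p + D) (by omega) (by omega))
    have hb := rnext_bounds hD m.2
    have h1 := hper (k - m.1) m.1 le_rfl m.2
    have hcast : (1 : ℤ) + (rnext D k m.1 : ℤ)
        = (k : ℤ) + 1 + ((rnext D k m.1 - k : ℕ) : ℤ) := by omega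
    have h2 := hC ⟨rnext D k m.1 - k, hgb m⟩
    show X (1 + (m.1 : ℤ)) ω = y ⟨rnext D k m.1 - k, hgb m⟩
    rw [h1, hcast]
    exact h2
  -- summing up
  set f : (Fin D → A) → ℝ≥0∞ := fun y => ⨆ x, μ (Ax x ∩ Cy y) with hfdef
  have hmuE0 : μ E0 ≤ ∑' y, f y := by
    calc μ E0 = μ (⋃ y, E0 ∩ Cy y) := by
          rw [← Set.inter_iUnion, hCunion, Set.inter_univ]
      _ ≤ ∑' y, μ (E0 ∩ Cy y) := measure_iUnion_le _
      _ ≤ ∑' y, f y := ENNReal.tsum_le_tsum fun y =>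
          le_trans (measure_mono (hsub y)) (le_iSup (fun x => μ (Ax x ∩ Cy y)) (g y))
  have hfle : ∀ y, f y ≤ μ (Cy y) :=
    fun y => iSup_le fun x => measure_mono Set.inter_subset_right
  have hT1 : ∑' y, f y ≤ 1 := by
    rw [← hCsum]
    exact ENNReal.tsum_le_tsum hfle
  have hTne : ∑' y, f y ≠ ∞ := ne_top_of_le_ne_top ENNReal.one_ne_top hT1
  have hfne : ∀ y, f y ≠ ∞ :=
    fun y => ne_top_of_le_ne_top (measure_ne_top μ _) (hfle y)
  have hSum : (∑' y : Fin D → A, ⨆ x : Fin k → A,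
      (μ {ω | (∀ m : Fin k, X (1 + (m : ℤ)) ω = x m) ∧
        ∀ m : Fin D, X ((k : ℤ) + 1 + (m : ℤ)) ω = y m}).toReal)
      = (∑' y, f y).toReal := by
    rw [ENNReal.tsum_toReal_eq hfne]
    refine tsum_congr fun y => ?_
    rw [hfdef]
    rw [ENNReal.toReal_iSup (fun x => measure_ne_top μ _)]
    rfl
  rw [condMinEntropy, neg_neg, hSum]
  by_cases hzero : (∑' y, f y) = 0
  · refine le_trans ?_ zero_le
    rw [hstat]
    exact hmuE0.trans_eq hzero
  · have hSpos : 0 < (∑' y, f y).toReal := ENNReal.toReal_pos hzero hTne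
    rw [Real.exp_log hSpos, ENNReal.ofReal_toReal hTne]
    rw [hstat]
    exact hmuE0
end

section
/- Let (X_i)_{i∈ℤ} be a stationary process over a countable alphabet and let (ρ_k)_{k≥1} be positive numbers with ∑_{k=1}^∞ ρ_k < ∞. Then almost surely, for all sufficiently large k, log R^{(2)}_k > (1/3) H_•(X₁^k | X_{k+1}^∞) + (1/3) log ρ_k. -/
open MeasureTheory ProbabilityTheory Filter Set
open scoped ENNReal NNReal

set_option linter.unusedSectionVars false

section Aux

variable {Ω A : Type*} [MeasurableSpace Ω] [MeasurableSpace A]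
  [MeasurableSingletonClass A] [Countable A]

/-- The event that the block at position `i+1` matches the block at `j+1`, length `k`. -/
def Ev (X : ℤ → Ω → A) (i j k : ℕ) : Set Ω :=
  {ω | ∀ m : ℕ, m < k → X ((i : ℤ) + 1 + (m : ℤ)) ω = X ((j : ℤ) + 1 + (m : ℤ)) ω}

/-- The joint block event appearing in `condMinEntropy`. -/
def GF (X : ℤ → Ω → A) (k i : ℕ) (x : Fin k → A) (y : Fin i → A) : Set Ω :=
  {ω | (∀ m : Fin k, X (1 + (m : ℤ)) ω = x m) ∧
    ∀ m : Fin i, X ((k : ℤ) + 1 + (m : ℤ)) ω = y m}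

/-- The future-block event. -/
def Fev (X : ℤ → Ω → A) (k i : ℕ) (y : Fin i → A) : Set Ω :=
  {ω | ∀ m : Fin i, X ((k : ℤ) + 1 + (m : ℤ)) ω = y m}

lemma condMinEntropy_eq (μ : Measure Ω) (X : ℤ → Ω → A) (k i : ℕ) :
    condMinEntropy μ X k i =
      -Real.log (∑' y : Fin i → A, ⨆ x : Fin k → A, (μ (GF X k i x y)).toReal) := rfl

variable {X : ℤ → Ω → A}

lemma measurableSet_eqXX (hX : ∀ i, Measurable (X i)) (a b : ℤ) :
    MeasurableSet {ω | X a ω = X b ω} := by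
  have h : {ω | X a ω = X b ω} = ⋃ v : A, (X a ⁻¹' {v} ∩ X b ⁻¹' {v}) := by
    ext ω
    simp only [Set.mem_setOf_eq, Set.mem_iUnion, Set.mem_inter_iff, Set.mem_preimage,
      Set.mem_singleton_iff]
    exact ⟨fun h => ⟨X b ω, h, rfl⟩, fun ⟨v, h1, h2⟩ => h1.trans h2.symm⟩
  rw [h]
  exact MeasurableSet.iUnion fun v =>
    ((hX a) (measurableSet_singleton v)).inter ((hX b) (measurableSet_singleton v))

lemma measurableSet_Ev (hX : ∀ i, Measurable (X i)) (i j k : ℕ) :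
    MeasurableSet (Ev X i j k) := by
  have h : Ev X i j k = ⋂ m : ℕ, ⋂ (_ : m < k),
      {ω | X ((i : ℤ) + 1 + (m : ℤ)) ω = X ((j : ℤ) + 1 + (m : ℤ)) ω} := by
    ext ω; simp [Ev]
  rw [h]
  exact MeasurableSet.iInter fun m => MeasurableSet.iInter fun _ => measurableSet_eqXX hX _ _

lemma measurableSet_Fev (hX : ∀ i, Measurable (X i)) (k i : ℕ) (y : Fin i → A) :
    MeasurableSet (Fev X k i y) := by
  have h : Fev X k i y = ⋂ m : Fin i, X ((k : ℤ) + 1 + (m : ℤ)) ⁻¹' {y m} := by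
    ext ω; simp [Fev]
  rw [h]
  exact MeasurableSet.iInter fun m => (hX _) (measurableSet_singleton _)

lemma Fev_disjoint (k i : ℕ) :
    Pairwise (Function.onFun Disjoint (Fev X k i)) := by
  intro y y' hyy'
  rw [Function.onFun, Set.disjoint_left]
  intro ω hy hy'
  exact hyy' (funext fun m => (hy m).symm.trans (hy' m))

lemma Fev_cover (k i : ℕ) : ⋃ y : Fin i → A, Fev X k i y = Set.univ := by
  ext ω
  simp only [Set.mem_iUnion, Set.mem_univ, iff_true]
  exact ⟨fun m => X ((k : ℤ) + 1 + (m : ℤ)) ω, fun m => rfl⟩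

end Aux
section Aux2

variable {Ω A : Type*} [MeasurableSpace Ω] [MeasurableSpace A]
  [MeasurableSingletonClass A] [Countable A]

/-- Basic arithmetic for the periodic extension. -/
lemma period_idx {d k m : ℕ} (hd : 1 ≤ d) (hm : m < k) :
    k ≤ m + d * ((k - m - 1) / d + 1) ∧ m + d * ((k - m - 1) / d + 1) < k + d := by
  set a := k - m - 1 with ha
  have h1 : d * (a / d) + a % d = a := Nat.div_add_mod a d
  have h2 : a % d < d := Nat.mod_lt _ hd
  have h3 : m + a + 1 = k := by omega
  set e := d * (a / d) with he
  constructor <;> [skip; skip] <;> (rw [Nat.mul_add, ← he, Nat.mul_one]; omega)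

lemma period_chain {X : ℤ → Ω → A} {ω : Ω} {k d : ℕ}
    (hω : ∀ m : ℕ, m < k → X ((d : ℤ) + 1 + (m : ℤ)) ω = X (1 + (m : ℤ)) ω)
    (m : ℕ) :
    ∀ s : ℕ, (∀ u : ℕ, u < s → m + d * u < k) →
      X (1 + (m : ℤ)) ω = X (1 + (m : ℤ) + (d : ℤ) * (s : ℤ)) ω := by
  intro s
  induction s with
  | zero => simp
  | succ s ih =>
    intro h
    have h1 := ih (fun u hu => h u (hu.trans (Nat.lt_succ_self s)))
    have hc : m + d * s < k := h s (Nat.lt_succ_self s)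
    have h2 := hω (m + d * s) hc
    have e2 : (1 : ℤ) + (m : ℤ) + (d : ℤ) * (s : ℤ) = 1 + ((m + d * s : ℕ) : ℤ) := by
      push_cast; ring
    have e3 : (1 : ℤ) + (m : ℤ) + (d : ℤ) * ((s + 1 : ℕ) : ℤ) =
        (d : ℤ) + 1 + ((m + d * s : ℕ) : ℤ) := by push_cast; ring
    rw [h1, e2, e3]
    exact h2.symm

/-- Key single-event bound: the probability that the block at the origin repeats
at distance `d` is at most `exp (-H_∞(X_1^k | X_{k+1}^{k+d}))`. -/
lemma meas_Ev_le {μ : Measure Ω} [IsProbabilityMeasure μ] {X : ℤ → Ω → A}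
    (hX : ∀ i, Measurable (X i)) (k d : ℕ) (hd : 1 ≤ d) :
    μ (Ev X d 0 k) ≤ ENNReal.ofReal (Real.exp (-condMinEntropy μ X k d)) := by
  have hd0 : 0 < d := hd
  -- the deterministic reconstruction map
  set t : ℕ → ℕ := fun m => (k - m - 1) / d + 1 with ht
  set f : (Fin d → A) → (Fin k → A) := fun y m =>
    y ⟨(m + d * t m - k) % d, Nat.mod_lt _ hd0⟩ with hf
  -- subset property
  have hsub : ∀ y : Fin d → A, Ev X d 0 k ∩ Fev X k d y ⊆ GF X k d (f y) y := by
    intro y ω hω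
    obtain ⟨hE, hF⟩ := hω
    refine ⟨fun m => ?_, hF⟩
    have hm : (m : ℕ) < k := m.isLt
    have hk1 : k ≤ (m : ℕ) + d * t (m : ℕ) := (period_idx hd hm).1
    have hk2 : (m : ℕ) + d * t (m : ℕ) < k + d := (period_idx hd hm).2
    have hω' : ∀ c : ℕ, c < k → X ((d : ℤ) + 1 + (c : ℤ)) ω = X (1 + (c : ℤ)) ω := by
      intro c hc
      have := hE c hc
      simpa using this
    have hchain := period_chain hω' (m : ℕ) (t m) ?_
    · -- rewrite the index into the future window
      have hmod : (m + d * t m - k) % d = m + d * t m - k := by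
        apply Nat.mod_eq_of_lt; omega
      have hlt : (m + d * t m - k) < d := by omega
      have e1 : (1 : ℤ) + ((m : ℕ) : ℤ) + (d : ℤ) * ((t m : ℕ) : ℤ) =
          (k : ℤ) + 1 + ((m + d * t m - k : ℕ) : ℤ) := by
        have hcast := Nat.cast_sub (R := ℤ) hk1
        push_cast [hcast]
        ring
      rw [e1] at hchain
      rw [hchain]
      have := hF ⟨(m + d * t m - k), hlt⟩
      simp only at this
      rw [this]
      simp only [hf]
      congr 1
      apply Fin.ext
      simp [hmod]
    · intro u hu
      have htm : t (m : ℕ) = (k - (m : ℕ) - 1) / d + 1 := rfl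
      have hu' : u ≤ (k - (m : ℕ) - 1) / d := by omega
      have : d * u ≤ d * ((k - m - 1) / d) := Nat.mul_le_mul_left d hu'
      have h2 : d * ((k - m - 1) / d) ≤ k - m - 1 := Nat.mul_div_le _ _
      omega
  -- measure computation
  have hEle : μ (Ev X d 0 k) ≤ ∑' y : Fin d → A, ⨆ x : Fin k → A, μ (GF X k d x y) := by
    calc μ (Ev X d 0 k) = μ (⋃ y : Fin d → A, Ev X d 0 k ∩ Fev X k d y) := by
          rw [← Set.inter_iUnion, Fev_cover, Set.inter_univ]
      _ ≤ ∑' y : Fin d → A, μ (Ev X d 0 k ∩ Fev X k d y) := measure_iUnion_le _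
      _ ≤ ∑' y : Fin d → A, ⨆ x : Fin k → A, μ (GF X k d x y) := by
          refine ENNReal.tsum_le_tsum fun y => ?_
          exact le_trans (measure_mono (hsub y)) (le_iSup (fun x => μ (GF X k d x y)) (f y))
  have hS1 : (∑' y : Fin d → A, ⨆ x : Fin k → A, μ (GF X k d x y)) ≤ 1 := by
    calc (∑' y : Fin d → A, ⨆ x : Fin k → A, μ (GF X k d x y))
        ≤ ∑' y : Fin d → A, μ (Fev X k d y) := by
          refine ENNReal.tsum_le_tsum fun y => ?_
          exact iSup_le fun x => measure_mono fun ω hω => hω.2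
      _ = μ (⋃ y : Fin d → A, Fev X k d y) :=
          (measure_iUnion (Fev_disjoint k d) (fun y => measurableSet_Fev hX k d y)).symm
      _ = 1 := by rw [Fev_cover, measure_univ]
  have hSne : (∑' y : Fin d → A, ⨆ x : Fin k → A, μ (GF X k d x y)) ≠ ⊤ :=
    (lt_of_le_of_lt hS1 ENNReal.one_lt_top).ne
  have hSr : (∑' y : Fin d → A, ⨆ x : Fin k → A, μ (GF X k d x y)).toReal =
      ∑' y : Fin d → A, ⨆ x : Fin k → A, (μ (GF X k d x y)).toReal := by
    rw [ENNReal.tsum_toReal_eq]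
    · exact tsum_congr fun y => ENNReal.toReal_iSup (fun x => measure_ne_top μ _)
    · intro y
      exact (lt_of_le_of_lt (le_trans (iSup_le fun x => measure_mono fun ω hω => hω.2)
        (measure_mono (Set.subset_univ _))) (measure_lt_top μ _)).ne
  rw [condMinEntropy_eq, neg_neg]
  rw [← ENNReal.ofReal_toReal (measure_ne_top μ (Ev X d 0 k))]
  apply ENNReal.ofReal_le_ofReal
  calc (μ (Ev X d 0 k)).toReal
      ≤ (∑' y : Fin d → A, ⨆ x : Fin k → A, μ (GF X k d x y)).toReal :=
        ENNReal.toReal_mono hSne hEle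
    _ = ∑' y : Fin d → A, ⨆ x : Fin k → A, (μ (GF X k d x y)).toReal := hSr
    _ ≤ Real.exp (Real.log
          (∑' y : Fin d → A, ⨆ x : Fin k → A, (μ (GF X k d x y)).toReal)) :=
        Real.le_exp_log _

end Aux2
section Aux3

variable {Ω A : Type*} [MeasurableSpace Ω] [MeasurableSpace A]
  [MeasurableSingletonClass A] [Countable A]

lemma iterate_X {X : ℤ → Ω → A} {T : Ω → Ω} (hshift : ∀ i ω, X i (T ω) = X (i + 1) ω)
    (j : ℕ) (i : ℤ) (ω : Ω) : X i (T^[j] ω) = X (i + j) ω := by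
  induction j generalizing i ω with
  | zero => simp
  | succ j ih =>
    rw [Function.iterate_succ_apply, ih, hshift]
    congr 1
    push_cast; ring

lemma Ev_shift {μ : Measure Ω} {X : ℤ → Ω → A} {T : Ω → Ω}
    (hX : ∀ i, Measurable (X i)) (hT : MeasurePreserving T μ μ)
    (hshift : ∀ i ω, X i (T ω) = X (i + 1) ω) (d j k : ℕ) :
    μ (Ev X (d + j) j k) = μ (Ev X d 0 k) := by
  have hp := hT.iterate j
  have hpre : T^[j] ⁻¹' Ev X d 0 k = Ev X (d + j) j k := by
    ext ω
    simp only [Set.mem_preimage, Ev, Set.mem_setOf_eq]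
    constructor
    · intro h m hm
      have h2 := h m hm
      rw [iterate_X hshift j, iterate_X hshift j] at h2
      convert h2 using 2 <;> push_cast <;> ring
    · intro h m hm
      rw [iterate_X hshift j, iterate_X hshift j]
      have h2 := h m hm
      convert h2 using 2 <;> push_cast <;> ring
  rw [← hpre, hp.measure_preimage (measurableSet_Ev hX d 0 k).nullMeasurableSet]

lemma exp_neg_condMinEntropy_le_one {μ : Measure Ω} [IsProbabilityMeasure μ]
    {X : ℤ → Ω → A} (hX : ∀ i, Measurable (X i)) (k i : ℕ) :
    Real.exp (-condMinEntropy μ X k i) ≤ 1 := by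
  have hS1 : (∑' y : Fin i → A, ⨆ x : Fin k → A, μ (GF X k i x y)) ≤ 1 := by
    calc (∑' y : Fin i → A, ⨆ x : Fin k → A, μ (GF X k i x y))
        ≤ ∑' y : Fin i → A, μ (Fev X k i y) := by
          refine ENNReal.tsum_le_tsum fun y => ?_
          exact iSup_le fun x => measure_mono fun ω hω => hω.2
      _ = μ (⋃ y : Fin i → A, Fev X k i y) :=
          (measure_iUnion (Fev_disjoint k i) (fun y => measurableSet_Fev hX k i y)).symm
      _ = 1 := by rw [Fev_cover, measure_univ]
  have hSne : (∑' y : Fin i → A, ⨆ x : Fin k → A, μ (GF X k i x y)) ≠ ⊤ :=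
    (lt_of_le_of_lt hS1 ENNReal.one_lt_top).ne
  have hSr : (∑' y : Fin i → A, ⨆ x : Fin k → A, μ (GF X k i x y)).toReal =
      ∑' y : Fin i → A, ⨆ x : Fin k → A, (μ (GF X k i x y)).toReal := by
    rw [ENNReal.tsum_toReal_eq]
    · exact tsum_congr fun y => ENNReal.toReal_iSup (fun x => measure_ne_top μ _)
    · intro y
      exact (lt_of_le_of_lt (le_trans (iSup_le fun x => measure_mono fun ω hω => hω.2)
        (measure_mono (Set.subset_univ _))) (measure_lt_top μ _)).ne
  have hSrle : (∑' y : Fin i → A, ⨆ x : Fin k → A, (μ (GF X k i x y)).toReal) ≤ 1 := by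
    rw [← hSr]
    calc (∑' y : Fin i → A, ⨆ x : Fin k → A, μ (GF X k i x y)).toReal
        ≤ (1 : ℝ≥0∞).toReal := ENNReal.toReal_mono (by simp) hS1
      _ = 1 := by simp
  have hSnn : 0 ≤ ∑' y : Fin i → A, ⨆ x : Fin k → A, (μ (GF X k i x y)).toReal :=
    tsum_nonneg fun y => Real.iSup_nonneg fun x => ENNReal.toReal_nonneg
  rw [condMinEntropy_eq, neg_neg]
  rcases eq_or_lt_of_le hSnn with h0 | h0
  · rw [← h0, Real.log_zero, Real.exp_zero]
  · rw [Real.exp_log h0]; exact hSrle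

/-- The series appearing in the weighted conditional entropy. -/
noncomputable def Wser {Ω A : Type*} [MeasurableSpace Ω] (μ : Measure Ω)
    (X : ℤ → Ω → A) (k : ℕ) : ℝ :=
  ∑' i : ℕ, Real.exp (-condMinEntropy μ X k (i + 1)) / ((i + 1) * (i + 2))

lemma wCE_eq (μ : Measure Ω) (X : ℤ → Ω → A) (k : ℕ) :
    weightedCondEntropy μ X k = -Real.log (Wser μ X k) := rfl

lemma summable_base : Summable (fun i : ℕ => 1 / (((i : ℝ) + 1) * ((i : ℝ) + 2))) := by
  have h2 : Summable (fun i : ℕ => 1 / ((i : ℝ) + 1) ^ 2) := by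
    have h := (Real.summable_one_div_nat_pow (p := 2)).mpr one_lt_two
    have := (summable_nat_add_iff 1).mpr h
    simpa using this
  refine Summable.of_nonneg_of_le (fun i => by positivity) (fun i => ?_) h2
  exact one_div_le_one_div_of_le (by positivity) (by nlinarith [Nat.cast_nonneg (α := ℝ) i])

lemma summable_Wterm (μ : Measure Ω) [IsProbabilityMeasure μ] {X : ℤ → Ω → A}
    (hX : ∀ i, Measurable (X i)) (k : ℕ) :
    Summable (fun i : ℕ =>
      Real.exp (-condMinEntropy μ X k (i + 1)) / (((i : ℝ) + 1) * ((i : ℝ) + 2))) := by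
  refine Summable.of_nonneg_of_le (fun i => by positivity) (fun i => ?_) summable_base
  have h1 : (0 : ℝ) < ((i : ℝ) + 1) * ((i : ℝ) + 2) := by positivity
  calc Real.exp (-condMinEntropy μ X k (i + 1)) / (((i : ℝ) + 1) * ((i : ℝ) + 2))
      ≤ 1 / (((i : ℝ) + 1) * ((i : ℝ) + 2)) := by
        gcongr
        exact exp_neg_condMinEntropy_le_one hX k (i + 1)

end Aux3
section Aux4

variable {Ω A : Type*} [MeasurableSpace Ω] [MeasurableSpace A]
  [MeasurableSingletonClass A] [Countable A]

lemma Wser_eq_tsum (μ : Measure Ω) (X : ℤ → Ω → A) (k : ℕ) :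
    Wser μ X k = ∑' i : ℕ,
      Real.exp (-condMinEntropy μ X k (i + 1)) / (((i : ℝ) + 1) * ((i : ℝ) + 2)) := by
  rfl

lemma Wser_pos (μ : Measure Ω) [IsProbabilityMeasure μ] {X : ℤ → Ω → A}
    (hX : ∀ i, Measurable (X i)) (k : ℕ) : 0 < Wser μ X k := by
  rw [Wser_eq_tsum]
  exact Summable.tsum_pos (summable_Wterm μ hX k) (fun i => by positivity) 0 (by positivity)

lemma exp_neg_wCE (μ : Measure Ω) [IsProbabilityMeasure μ] {X : ℤ → Ω → A}
    (hX : ∀ i, Measurable (X i)) (k : ℕ) :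
    Real.exp (-weightedCondEntropy μ X k) = Wser μ X k := by
  rw [wCE_eq, neg_neg, Real.exp_log (Wser_pos μ hX k)]

lemma exp_cME_le_term (μ : Measure Ω) [IsProbabilityMeasure μ] {X : ℤ → Ω → A}
    (hX : ∀ i, Measurable (X i)) (k d : ℕ) (hd : 1 ≤ d) :
    Real.exp (-condMinEntropy μ X k d) ≤ (d : ℝ) * ((d : ℝ) + 1) * Wser μ X k := by
  have hterm := Summable.le_tsum (summable_Wterm μ hX k) (d - 1)
    (fun j _ => by positivity)
  have hd1 : d - 1 + 1 = d := by omega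
  rw [hd1] at hterm
  have hc : ((d - 1 : ℕ) : ℝ) = (d : ℝ) - 1 := by
    push_cast [hd]; ring
  rw [hc] at hterm
  have hterm2 : Real.exp (-condMinEntropy μ X k d) / ((d : ℝ) * ((d : ℝ) + 1)) ≤
      Wser μ X k := by
    rw [Wser_eq_tsum]
    rw [show (d : ℝ) - 1 + 1 = d by ring, show (d : ℝ) - 1 + 2 = d + 1 by ring] at hterm
    exact hterm
  have hpos : (0 : ℝ) < (d : ℝ) * ((d : ℝ) + 1) := by
    have : (1 : ℝ) ≤ (d : ℝ) := by exact_mod_cast hd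
    nlinarith
  calc Real.exp (-condMinEntropy μ X k d)
      = (d : ℝ) * ((d : ℝ) + 1) *
        (Real.exp (-condMinEntropy μ X k d) / ((d : ℝ) * ((d : ℝ) + 1))) := by
        field_simp
    _ ≤ (d : ℝ) * ((d : ℝ) + 1) * Wser μ X k :=
        mul_le_mul_of_nonneg_left hterm2 hpos.le

end Aux4
section Aux5

variable {Ω A : Type*} [MeasurableSpace Ω] [MeasurableSpace A]
  [MeasurableSingletonClass A] [Countable A]

lemma repTime_prob (μ : Measure Ω) [IsProbabilityMeasure μ] {X : ℤ → Ω → A} {T : Ω → Ω}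
    (hX : ∀ i, Measurable (X i)) (hT : MeasurePreserving T μ μ)
    (hshift : ∀ i ω, X i (T ω) = X (i + 1) ω) (k N : ℕ) :
    μ {ω | repTime X k ω ≤ (N : ℕ∞)} ≤
      ENNReal.ofReal ((N : ℝ) * ((N : ℝ) * ((N : ℝ) + 1) * Wser μ X k)) := by
  have hWpos := Wser_pos μ hX k
  -- Step 1: inclusion into a finite union of match events
  have hsub : {ω | repTime X k ω ≤ (N : ℕ∞)} ⊆
      ⋃ i ∈ Finset.Icc 1 N, ⋃ j ∈ Finset.range i, Ev X i j k := by
    intro ω hω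
    simp only [Set.mem_setOf_eq, repTime] at hω
    by_contra hc
    have key : ∀ e ∈ {e : ℕ∞ | ∃ i : ℕ, e = (i : ℕ∞) ∧ 1 ≤ i ∧ ∃ j : ℕ, j < i ∧
        ∀ m : ℕ, m < k → X ((i : ℤ) + 1 + (m : ℤ)) ω = X ((j : ℤ) + 1 + (m : ℤ)) ω},
        (N : ℕ∞) < e := by
      rintro e ⟨i, rfl, h1, j, hj, hmatch⟩
      by_contra hle
      push_neg at hle
      have hiN : i ≤ N := by exact_mod_cast hle
      exact hc (Set.mem_biUnion (Finset.mem_Icc.mpr ⟨h1, hiN⟩)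
        (Set.mem_biUnion (Finset.mem_range.mpr hj) hmatch))
    have h2 : (N : ℕ∞) + 1 ≤ sInf {e : ℕ∞ | ∃ i : ℕ, e = (i : ℕ∞) ∧ 1 ≤ i ∧ ∃ j : ℕ, j < i ∧
        ∀ m : ℕ, m < k → X ((i : ℤ) + 1 + (m : ℤ)) ω = X ((j : ℤ) + 1 + (m : ℤ)) ω} :=
      le_sInf fun e he => Order.add_one_le_of_lt (key e he)
    have h3 : (N : ℕ∞) + 1 ≤ (N : ℕ∞) := le_trans h2 hω
    have h4 : N + 1 ≤ N := by exact_mod_cast h3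
    omega
  -- Step 2: per-`i` bound for the inner sum
  have inner : ∀ i ∈ Finset.Icc 1 N,
      ∑ j ∈ Finset.range i, μ (Ev X i j k) ≤
        ENNReal.ofReal ((N : ℝ) * ((N : ℝ) + 1) * Wser μ X k) := by
    intro i hi
    obtain ⟨hi1, hiN⟩ := Finset.mem_Icc.mp hi
    have h1 : ∀ j ∈ Finset.range i, μ (Ev X i j k) = μ (Ev X (i - j) 0 k) := by
      intro j hj
      have hji : j < i := Finset.mem_range.mp hj
      have h := Ev_shift hX hT hshift (i - j) j k
      rwa [Nat.sub_add_cancel hji.le] at h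
    have realbound : ∑ j ∈ Finset.range i, Real.exp (-condMinEntropy μ X k (i - j)) ≤
        (N : ℝ) * ((N : ℝ) + 1) * Wser μ X k := by
      have hre : ∑ j ∈ Finset.range i, Real.exp (-condMinEntropy μ X k (i - j)) =
          ∑ j ∈ Finset.range i, Real.exp (-condMinEntropy μ X k (j + 1)) := by
        rw [← Finset.sum_range_reflect (fun j => Real.exp (-condMinEntropy μ X k (j + 1))) i]
        refine Finset.sum_congr rfl fun j hj => ?_
        have hji : j < i := Finset.mem_range.mp hj
        have he : i - 1 - j + 1 = i - j := by omega
        rw [he]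
      rw [hre]
      have step : ∀ j ∈ Finset.range i, Real.exp (-condMinEntropy μ X k (j + 1)) ≤
          (N : ℝ) * ((N : ℝ) + 1) *
            (Real.exp (-condMinEntropy μ X k (j + 1)) / (((j : ℝ) + 1) * ((j : ℝ) + 2))) := by
        intro j hj
        have hji : j < i := Finset.mem_range.mp hj
        have hj1 : (j : ℝ) + 1 ≤ (N : ℝ) := by
          have : j + 1 ≤ N := by omega
          exact_mod_cast this
        have hj2 : (j : ℝ) + 2 ≤ (N : ℝ) + 1 := by linarith
        have hNnn : (0 : ℝ) ≤ (N : ℝ) := Nat.cast_nonneg N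
        calc Real.exp (-condMinEntropy μ X k (j + 1))
            = (((j : ℝ) + 1) * ((j : ℝ) + 2)) *
              (Real.exp (-condMinEntropy μ X k (j + 1)) /
                (((j : ℝ) + 1) * ((j : ℝ) + 2))) := by
              field_simp
          _ ≤ (N : ℝ) * ((N : ℝ) + 1) *
              (Real.exp (-condMinEntropy μ X k (j + 1)) /
                (((j : ℝ) + 1) * ((j : ℝ) + 2))) := by
              refine mul_le_mul_of_nonneg_right ?_ (by positivity)
              exact mul_le_mul hj1 hj2 (by positivity) hNnn
      calc ∑ j ∈ Finset.range i, Real.exp (-condMinEntropy μ X k (j + 1))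
          ≤ ∑ j ∈ Finset.range i, (N : ℝ) * ((N : ℝ) + 1) *
              (Real.exp (-condMinEntropy μ X k (j + 1)) /
                (((j : ℝ) + 1) * ((j : ℝ) + 2))) := Finset.sum_le_sum step
        _ = (N : ℝ) * ((N : ℝ) + 1) * ∑ j ∈ Finset.range i,
              (Real.exp (-condMinEntropy μ X k (j + 1)) /
                (((j : ℝ) + 1) * ((j : ℝ) + 2))) := by rw [Finset.mul_sum]
        _ ≤ (N : ℝ) * ((N : ℝ) + 1) * Wser μ X k := by
            refine mul_le_mul_of_nonneg_left ?_ (by positivity)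
            rw [Wser_eq_tsum]
            exact Summable.sum_le_tsum (Finset.range i) (fun j _ => by positivity)
              (summable_Wterm μ hX k)
    calc ∑ j ∈ Finset.range i, μ (Ev X i j k)
        = ∑ j ∈ Finset.range i, μ (Ev X (i - j) 0 k) := Finset.sum_congr rfl h1
      _ ≤ ∑ j ∈ Finset.range i,
            ENNReal.ofReal (Real.exp (-condMinEntropy μ X k (i - j))) := by
          refine Finset.sum_le_sum fun j hj => ?_
          have hji : j < i := Finset.mem_range.mp hj
          exact meas_Ev_le hX k (i - j) (by omega)
      _ = ENNReal.ofReal (∑ j ∈ Finset.range i,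
            Real.exp (-condMinEntropy μ X k (i - j))) :=
          (ENNReal.ofReal_sum_of_nonneg (fun j _ => (Real.exp_pos _).le)).symm
      _ ≤ ENNReal.ofReal ((N : ℝ) * ((N : ℝ) + 1) * Wser μ X k) :=
          ENNReal.ofReal_le_ofReal realbound
  -- Step 3: put it together
  calc μ {ω | repTime X k ω ≤ (N : ℕ∞)}
      ≤ μ (⋃ i ∈ Finset.Icc 1 N, ⋃ j ∈ Finset.range i, Ev X i j k) := measure_mono hsub
    _ ≤ ∑ i ∈ Finset.Icc 1 N, μ (⋃ j ∈ Finset.range i, Ev X i j k) :=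
        measure_biUnion_finset_le _ _
    _ ≤ ∑ i ∈ Finset.Icc 1 N, ∑ j ∈ Finset.range i, μ (Ev X i j k) :=
        Finset.sum_le_sum fun i _ => measure_biUnion_finset_le _ _
    _ ≤ ∑ _i ∈ Finset.Icc 1 N,
          ENNReal.ofReal ((N : ℝ) * ((N : ℝ) + 1) * Wser μ X k) :=
        Finset.sum_le_sum inner
    _ = (N : ℝ≥0∞) * ENNReal.ofReal ((N : ℝ) * ((N : ℝ) + 1) * Wser μ X k) := by
        rw [Finset.sum_const, Nat.card_Icc]
        simp [nsmul_eq_mul]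
    _ = ENNReal.ofReal ((N : ℝ) * ((N : ℝ) * ((N : ℝ) + 1) * Wser μ X k)) := by
        rw [← ENNReal.ofReal_natCast N, ← ENNReal.ofReal_mul (Nat.cast_nonneg N)]

end Aux5

/-- **Proposition 3.** For a stationary process over a countable alphabet and summable
positive `(ρ_k)`, almost surely for all sufficiently large `k`,
`log R⁽²⁾_k > (1/3) H_•(X₁^k|X_{k+1}^∞) + (1/3) log ρ_k`, i.e.
`R⁽²⁾_k > exp((1/3) H_•(X₁^k|X_{k+1}^∞) + (1/3) log ρ_k)` (also when `R⁽²⁾_k = ∞`). -/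
theorem sandwich_repetition_lower {Ω A : Type*} [MeasurableSpace Ω] [MeasurableSpace A]
    [MeasurableSingletonClass A] [Countable A]
    (μ : Measure Ω) [IsProbabilityMeasure μ] (X : ℤ → Ω → A) (hXmeas : ∀ i, Measurable (X i))
    (T : Ω → Ω) (hT : MeasurePreserving T μ μ) (hshift : ∀ i ω, X i (T ω) = X (i + 1) ω)
    (ρ : ℕ → ℝ) (hρpos : ∀ k, 0 < ρ k) (hρ : Summable ρ) :
    ∀ᵐ ω ∂μ, ∀ᶠ k : ℕ in atTop,
      ENNReal.ofReal
          (Real.exp (1 / 3 * weightedCondEntropy μ X k + 1 / 3 * Real.log (ρ k)))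
        < ((repTime X k ω : ℕ∞) : ℝ≥0∞) := by
  classical
  set r : ℕ → ℝ := fun k =>
    Real.exp (1 / 3 * weightedCondEntropy μ X k + 1 / 3 * Real.log (ρ k)) with hr
  set Bad : ℕ → Set Ω := fun k =>
    {ω | ((repTime X k ω : ℕ∞) : ℝ≥0∞) ≤ ENNReal.ofReal (r k)} with hBad
  have hrpos : ∀ k, 0 < r k := fun k => Real.exp_pos _
  have hBadsub : ∀ k, Bad k ⊆ {ω | repTime X k ω ≤ (⌊r k⌋₊ : ℕ∞)} := by
    intro k ω hω
    simp only [hBad, Set.mem_setOf_eq] at hω ⊢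
    cases h : repTime X k ω with
    | top =>
      rw [h] at hω
      have : ((⊤ : ℕ∞) : ℝ≥0∞) = ⊤ := by norm_cast
      rw [this, top_le_iff] at hω
      exact absurd hω ENNReal.ofReal_ne_top
    | coe n =>
      rw [h] at hω
      have h2 : ((n : ℕ∞) : ℝ≥0∞) = (n : ℝ≥0∞) := by norm_cast
      rw [h2, ← ENNReal.ofReal_natCast,
        ENNReal.ofReal_le_ofReal_iff (hrpos k).le] at hω
      exact_mod_cast Nat.le_floor hω
  have hmeas_bound : ∀ k, μ (Bad k) ≤ ENNReal.ofReal (2 * ρ k) := by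
    intro k
    refine le_trans (measure_mono (hBadsub k))
      (le_trans (repTime_prob μ hXmeas hT hshift k ⌊r k⌋₊)
        (ENNReal.ofReal_le_ofReal ?_))
    set N := ⌊r k⌋₊ with hN
    have hW := Wser_pos μ hXmeas k
    have hrW : (r k) ^ 3 * Wser μ X k = ρ k := by
      have h3 : (r k) ^ 3 = Real.exp (weightedCondEntropy μ X k + Real.log (ρ k)) := by
        rw [hr]
        have := Real.exp_nat_mul
          (1 / 3 * weightedCondEntropy μ X k + 1 / 3 * Real.log (ρ k)) 3
        rw [← this]
        congr 1
        push_cast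
        ring
      rw [h3, Real.exp_add, Real.exp_log (hρpos k), ← exp_neg_wCE μ hXmeas k]
      calc Real.exp (weightedCondEntropy μ X k) * ρ k *
            Real.exp (-weightedCondEntropy μ X k)
          = (Real.exp (weightedCondEntropy μ X k) *
              Real.exp (-weightedCondEntropy μ X k)) * ρ k := by ring
        _ = ρ k := by rw [← Real.exp_add, add_neg_cancel, Real.exp_zero, one_mul]
    rcases Nat.eq_zero_or_pos N with h0 | h1
    · rw [h0]
      simp only [Nat.cast_zero, zero_mul]
      have := (hρpos k).le
      linarith
    · have hNr : (N : ℝ) ≤ r k := Nat.floor_le (hrpos k).le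
      have hN1 : (N : ℝ) + 1 ≤ 2 * r k := by
        have : (1 : ℝ) ≤ (N : ℝ) := by exact_mod_cast h1
        linarith
      have hNnn : (0 : ℝ) ≤ (N : ℝ) := Nat.cast_nonneg N
      calc (N : ℝ) * ((N : ℝ) * ((N : ℝ) + 1) * Wser μ X k)
          ≤ r k * (r k * (2 * r k) * Wser μ X k) := by
            have hstep : (N : ℝ) * ((N : ℝ) + 1) ≤ r k * (2 * r k) :=
              mul_le_mul hNr hN1 (by linarith) (hrpos k).le
            have hstep2 : (N : ℝ) * ((N : ℝ) + 1) * Wser μ X k ≤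
                r k * (2 * r k) * Wser μ X k :=
              mul_le_mul_of_nonneg_right hstep hW.le
            exact mul_le_mul hNr hstep2 (by positivity) (hrpos k).le
        _ = 2 * ((r k) ^ 3 * Wser μ X k) := by ring
        _ = 2 * ρ k := by rw [hrW]
  have hsum : (∑' k : ℕ, μ (Bad k)) ≠ ⊤ := by
    have h1 : (∑' k : ℕ, μ (Bad k)) ≤ ∑' k : ℕ, ENNReal.ofReal (2 * ρ k) :=
      ENNReal.tsum_le_tsum hmeas_bound
    have h2 : (∑' k : ℕ, ENNReal.ofReal (2 * ρ k)) = ENNReal.ofReal (∑' k, 2 * ρ k) :=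
      (ENNReal.ofReal_tsum_of_nonneg (fun k => by have := (hρpos k).le; linarith)
        (hρ.mul_left 2)).symm
    exact (lt_of_le_of_lt (h1.trans_eq h2) ENNReal.ofReal_lt_top).ne
  have h0 : μ {ω | ∃ᶠ k in atTop, ω ∈ Bad k} = 0 :=
    measure_setOf_frequently_eq_zero (by simpa using hsum)
  rw [ae_iff]
  have hset : {ω | ¬ ∀ᶠ k : ℕ in atTop,
      ENNReal.ofReal (Real.exp (1 / 3 * weightedCondEntropy μ X k +
        1 / 3 * Real.log (ρ k))) < ((repTime X k ω : ℕ∞) : ℝ≥0∞)} =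
      {ω | ∃ᶠ k in atTop, ω ∈ Bad k} := by
    ext ω
    simp only [Set.mem_setOf_eq, Filter.not_eventually, not_lt, hBad, hr]
  rw [hset]
  exact h0
end

section
/- Let (X_i)_{i∈ℤ} be a stationary process over a countable alphabet and define the context length I_k := min{i : log i ≥ H_∞(X₁^k | X_{k+1}^{k+i})}. Then log I_k - log 2 ≤ H_•(X₁^k | X_{k+1}^∞) ≤ 3 log I_k + 1/I_k. -/
open MeasureTheory ProbabilityTheory Filter Set
open scoped ENNReal NNReal

/-! ### Auxiliary material for the proof -/

namespace WCEAux

variable {Ω A : Type*} [MeasurableSpace Ω] [MeasurableSpace A]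
  [MeasurableSingletonClass A] [Countable A]

/-- The joint block event `{X_1^k = x, X_{k+1}^{k+i} = y}`. -/
def ES (X : ℤ → Ω → A) (k i : ℕ) (x : Fin k → A) (y : Fin i → A) : Set Ω :=
  {ω | (∀ m : Fin k, X (1 + (m : ℤ)) ω = x m) ∧
      ∀ m : Fin i, X ((k : ℤ) + 1 + (m : ℤ)) ω = y m}

/-- `∑_y max_x P(X_1^k = x, X_{k+1}^{k+i} = y)` as an extended nonnegative real. -/
noncomputable def Qe (μ : Measure Ω) (X : ℤ → Ω → A) (k i : ℕ) : ℝ≥0∞ :=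
  ∑' y : Fin i → A, ⨆ x : Fin k → A, μ (ES X k i x y)

def snocEquivA (A : Type*) (i : ℕ) : ((Fin i → A) × A) ≃ (Fin (i+1) → A) where
  toFun p := Fin.snoc p.1 p.2
  invFun y := (Fin.init y, y (Fin.last i))
  left_inv p := by simp
  right_inv y := by simp [Fin.snoc_init_self]

variable {X : ℤ → Ω → A} (hX : ∀ i, Measurable (X i)) (μ : Measure Ω) {k i : ℕ}

set_option linter.unusedSectionVars false

include hX in
lemma measurableSet_ES (x : Fin k → A) (y : Fin i → A) : MeasurableSet (ES X k i x y) := by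
  have : ES X k i x y = (⋂ m : Fin k, X (1 + (m : ℤ)) ⁻¹' {x m}) ∩
      ⋂ m : Fin i, X ((k : ℤ) + 1 + (m : ℤ)) ⁻¹' {y m} := by
    ext ω; simp [ES, Set.mem_iInter]
  rw [this]
  exact (MeasurableSet.iInter fun m => (hX _) (measurableSet_singleton _)).inter
    (MeasurableSet.iInter fun m => (hX _) (measurableSet_singleton _))

lemma iUnion_ES : ⋃ p : (Fin i → A) × (Fin k → A), ES X k i p.2 p.1 = univ := by
  ext ω
  simp only [Set.mem_iUnion, Set.mem_univ, iff_true]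
  exact ⟨⟨fun m => X ((k : ℤ) + 1 + (m : ℤ)) ω, fun m => X (1 + (m : ℤ)) ω⟩,
    fun m => rfl, fun m => rfl⟩

lemma pairwise_ES :
    Pairwise (Function.onFun Disjoint fun p : (Fin i → A) × (Fin k → A) => ES X k i p.2 p.1) := by
  intro p q hpq
  rw [Function.onFun, Set.disjoint_left]
  rintro ω ⟨h1, h2⟩ ⟨h1', h2'⟩
  apply hpq
  ext m
  · rw [← h2 m, ← h2' m]
  · rw [← h1 m, ← h1' m]

include hX in
lemma tsum_ES [IsProbabilityMeasure μ] :
    ∑' p : (Fin i → A) × (Fin k → A), μ (ES X k i p.2 p.1) = 1 := by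
  rw [← measure_iUnion (pairwise_ES) fun p => measurableSet_ES hX _ _, iUnion_ES,
    measure_univ]

include hX in
lemma Qe_le_one [IsProbabilityMeasure μ] : Qe μ X k i ≤ 1 := by
  calc Qe μ X k i ≤ ∑' y : Fin i → A, ∑' x : Fin k → A, μ (ES X k i x y) :=
        ENNReal.tsum_le_tsum fun y => iSup_le fun x => ENNReal.le_tsum x
    _ = 1 := by rw [← ENNReal.tsum_prod]; exact tsum_ES hX μ

include hX in
lemma Qe_pos [IsProbabilityMeasure μ] : 0 < Qe μ X k i := by
  have h1 : (0 : ℝ≥0∞) < 1 := zero_lt_one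
  rw [← tsum_ES hX μ (k := k) (i := i)] at h1
  obtain ⟨p, hp⟩ : ∃ p : (Fin i → A) × (Fin k → A), 0 < μ (ES X k i p.2 p.1) := by
    by_contra h
    push_neg at h
    simp only [nonpos_iff_eq_zero] at h
    rw [tsum_congr h] at h1
    simp at h1
  calc (0 : ℝ≥0∞) < μ (ES X k i p.2 p.1) := hp
    _ ≤ ⨆ x : Fin k → A, μ (ES X k i x p.1) := le_iSup (fun x => μ (ES X k i x p.1)) p.2
    _ ≤ Qe μ X k i := ENNReal.le_tsum p.1

lemma ES_eq_iUnion_snoc (x : Fin k → A) (y : Fin i → A) :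
    ES X k i x y = ⋃ a : A, ES X k (i+1) x (Fin.snoc y a) := by
  ext ω
  simp only [ES, Set.mem_iUnion, Set.mem_setOf_eq]
  constructor
  · rintro ⟨h1, h2⟩
    refine ⟨X ((k:ℤ) + 1 + (i:ℤ)) ω, h1, fun m => ?_⟩
    induction m using Fin.lastCases with
    | last => simp [Fin.snoc_last, Fin.val_last]
    | cast j => simpa [Fin.snoc_castSucc] using h2 j
  · rintro ⟨a, h1, h2⟩
    exact ⟨h1, fun m => by simpa [Fin.snoc_castSucc] using h2 m.castSucc⟩

include hX in
lemma measure_ES_snoc (x : Fin k → A) (y : Fin i → A) :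
    μ (ES X k i x y) = ∑' a : A, μ (ES X k (i+1) x (Fin.snoc y a)) := by
  rw [ES_eq_iUnion_snoc]
  refine measure_iUnion ?_ fun a => measurableSet_ES hX x _
  intro a b hab
  rw [Function.onFun, Set.disjoint_left]
  rintro ω ⟨_, h2⟩ ⟨_, h2'⟩
  apply hab
  have ha := h2 (Fin.last i)
  have hb := h2' (Fin.last i)
  simp only [Fin.snoc_last] at ha hb
  rw [← ha, ← hb]

include hX in
lemma Qe_mono_succ : Qe μ X k i ≤ Qe μ X k (i+1) := by
  calc Qe μ X k i
      = ∑' y : Fin i → A, ⨆ x : Fin k → A, ∑' a : A, μ (ES X k (i+1) x (Fin.snoc y a)) := by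
        refine tsum_congr fun y => ?_
        exact iSup_congr fun x => measure_ES_snoc hX μ x y
    _ ≤ ∑' y : Fin i → A, ∑' a : A, ⨆ x : Fin k → A, μ (ES X k (i+1) x (Fin.snoc y a)) :=
        ENNReal.tsum_le_tsum fun y => iSup_le fun x =>
          ENNReal.tsum_le_tsum fun a => le_iSup (fun x => μ (ES X k (i+1) x (Fin.snoc y a))) x
    _ = ∑' p : (Fin i → A) × A, ⨆ x : Fin k → A, μ (ES X k (i+1) x (Fin.snoc p.1 p.2)) :=
        (ENNReal.tsum_prod).symm
    _ = Qe μ X k (i+1) :=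
        Equiv.tsum_eq (snocEquivA A i) fun y' => ⨆ x : Fin k → A, μ (ES X k (i+1) x y')

include hX in
lemma Qe_mono {j : ℕ} (hij : i ≤ j) : Qe μ X k i ≤ Qe μ X k j := by
  induction j, hij using Nat.le_induction with
  | base => exact le_refl _
  | succ n hn ih => exact ih.trans (Qe_mono_succ hX μ)

lemma tsum_toReal_eq_Qe [IsProbabilityMeasure μ] :
    ∑' y : Fin i → A, ⨆ x : Fin k → A, (μ (ES X k i x y)).toReal = (Qe μ X k i).toReal := by
  rw [Qe, ENNReal.tsum_toReal_eq fun y => ?_]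
  · exact tsum_congr fun y => (ENNReal.toReal_iSup fun x => measure_ne_top μ _).symm
  · exact ne_top_of_le_ne_top ENNReal.one_ne_top (iSup_le fun x => prob_le_one)

include hX in
lemma condMinEntropy_eq [IsProbabilityMeasure μ] :
    condMinEntropy μ X k i = -Real.log (Qe μ X k i).toReal := by
  rw [← tsum_toReal_eq_Qe μ]
  rfl

end WCEAux

namespace WCETel

noncomputable def gg (j : ℕ) : ℝ := (((j:ℝ)+1) * ((j:ℝ)+2))⁻¹

noncomputable def ff (j : ℕ) : ℝ := ((j:ℝ)+1)⁻¹

lemma gg_pos (j : ℕ) : 0 < gg j := by unfold gg; positivity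

lemma gg_eq (j : ℕ) : gg j = ff j - ff (j+1) := by
  unfold gg ff
  push_cast
  rw [eq_sub_iff_add_eq]
  field_simp
  ring

lemma sum_range_gg (n : ℕ) : ∑ j ∈ Finset.range n, gg j = 1 - ff n := by
  simp_rw [gg_eq]
  rw [Finset.sum_range_sub' ff n]
  norm_num [ff]

lemma ff_tendsto : Tendsto ff atTop (nhds 0) := by
  have := tendsto_one_div_add_atTop_nhds_zero_nat (𝕜 := ℝ)
  exact (by simpa [one_div] using this : Tendsto (fun j : ℕ => ((j:ℝ)+1)⁻¹) atTop (nhds 0))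

lemma hasSum_gg_add (n : ℕ) : HasSum (fun j : ℕ => gg (j + n)) (ff n) := by
  rw [hasSum_iff_tendsto_nat_of_nonneg (fun j => (gg_pos _).le)]
  have heq : ∀ m : ℕ, ∑ j ∈ Finset.range m, gg (j + n) = ff n - ff (m + n) := by
    intro m
    have h := Finset.sum_range_sub' (fun j : ℕ => ff (j + n)) m
    simp only [Nat.zero_add] at h
    rw [← h]
    refine Finset.sum_congr rfl fun j _ => ?_
    rw [gg_eq]
    have hjn : j + n + 1 = j + 1 + n := by omega
    rw [hjn]
  simp only [heq]
  have h0 : Tendsto (fun m : ℕ => ff (m + n)) atTop (nhds 0) :=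
    ff_tendsto.comp (tendsto_add_atTop_nat n)
  simpa using (tendsto_const_nhds (x := ff n) (f := atTop)).sub h0

lemma summable_gg : Summable gg := by
  have := (hasSum_gg_add 0).summable
  simpa using this

lemma tsum_gg_add (n : ℕ) : ∑' j : ℕ, gg (j + n) = ff n := (hasSum_gg_add n).tsum_eq

lemma tsum_gg : ∑' j : ℕ, gg j = 1 := by
  have := (hasSum_gg_add 0).tsum_eq
  simpa [ff] using this

end WCETel

/-- For a stationary process over a countable alphabet, the context length `I_k` satisfies
`log I_k - log 2 ≤ H_•(X₁^k|X_{k+1}^∞) ≤ 3 log I_k + 1/I_k`. -/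
theorem weightedCondEntropy_contextLen {Ω A : Type*} [MeasurableSpace Ω] [MeasurableSpace A]
    [MeasurableSingletonClass A] [Countable A]
    (μ : Measure Ω) [IsProbabilityMeasure μ] (X : ℤ → Ω → A) (hXmeas : ∀ i, Measurable (X i))
    (T : Ω → Ω) (hT : MeasurePreserving T μ μ) (hshift : ∀ i ω, X i (T ω) = X (i + 1) ω)
    (k : ℕ) (hk : 1 ≤ k) :
    Real.log (contextLen μ X k) - Real.log 2 ≤ weightedCondEntropy μ X k ∧
    weightedCondEntropy μ X k
      ≤ 3 * Real.log (contextLen μ X k) + 1 / (contextLen μ X k) := by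
  classical
  set q : ℕ → ℝ := fun i => (WCEAux.Qe μ X k i).toReal with hqdef
  have hQne : ∀ i : ℕ, WCEAux.Qe μ X k i ≠ ⊤ := fun i =>
    ne_top_of_le_ne_top ENNReal.one_ne_top (WCEAux.Qe_le_one hXmeas μ)
  have hq_pos : ∀ i, 0 < q i := fun i =>
    ENNReal.toReal_pos (WCEAux.Qe_pos hXmeas μ).ne' (hQne i)
  have hq_le_one : ∀ i, q i ≤ 1 := fun i => by
    have := ENNReal.toReal_mono ENNReal.one_ne_top
      (WCEAux.Qe_le_one hXmeas μ (k := k) (i := i))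
    simpa [hqdef] using this
  have hq_mono : ∀ {i j : ℕ}, i ≤ j → q i ≤ q j := fun {i j} hij =>
    ENNReal.toReal_mono (hQne j) (WCEAux.Qe_mono hXmeas μ hij)
  have hcond : ∀ i, condMinEntropy μ X k i = -Real.log (q i) := fun i =>
    WCEAux.condMinEntropy_eq hXmeas μ
  -- context length facts
  have hMne : {i : ℕ | 1 ≤ i ∧ condMinEntropy μ X k i ≤ Real.log i}.Nonempty := by
    refine ⟨max 1 ⌈Real.exp (-Real.log (q 1))⌉₊, le_max_left _ _, ?_⟩
    have h1 : condMinEntropy μ X k (max 1 ⌈Real.exp (-Real.log (q 1))⌉₊)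
        ≤ -Real.log (q 1) := by
      rw [hcond, neg_le_neg_iff]
      exact Real.log_le_log (hq_pos 1) (hq_mono (le_max_left _ _))
    refine h1.trans ?_
    have h2 : Real.exp (-Real.log (q 1))
        ≤ ((max 1 ⌈Real.exp (-Real.log (q 1))⌉₊ : ℕ) : ℝ) := by
      calc Real.exp (-Real.log (q 1)) ≤ (⌈Real.exp (-Real.log (q 1))⌉₊ : ℝ) := Nat.le_ceil _
        _ ≤ _ := by exact_mod_cast Nat.cast_le.mpr (le_max_right _ _)
    calc -Real.log (q 1) = Real.log (Real.exp (-Real.log (q 1))) := (Real.log_exp _).symm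
      _ ≤ _ := Real.log_le_log (Real.exp_pos _) h2
  have hImem : contextLen μ X k ∈
      {i : ℕ | 1 ≤ i ∧ condMinEntropy μ X k i ≤ Real.log i} := Nat.sInf_mem hMne
  have hI1 : 1 ≤ contextLen μ X k := hImem.1
  obtain ⟨n, hn⟩ : ∃ n : ℕ, contextLen μ X k = n + 1 :=
    ⟨contextLen μ X k - 1, by omega⟩
  have hqI : ((n:ℝ)+1)⁻¹ ≤ q (n+1) := by
    have h := hImem.2
    rw [hn, hcond] at h
    have h2 : Real.log (((n:ℝ)+1)⁻¹) ≤ Real.log (q (n+1)) := by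
      rw [Real.log_inv]
      push_cast at h
      linarith
    exact (Real.log_le_log_iff (by positivity) (hq_pos _)).mp h2
  have hqlt : ∀ i : ℕ, 1 ≤ i → i < contextLen μ X k → q i ≤ ((i:ℝ))⁻¹ := by
    intro i h1 h2
    have h2' : i < sInf {i : ℕ | 1 ≤ i ∧ condMinEntropy μ X k i ≤ Real.log i} := h2
    have hnot := Nat.notMem_of_lt_sInf h2'
    simp only [Set.mem_setOf_eq, not_and, not_le] at hnot
    have h3 : Real.log (i : ℝ) < -Real.log (q i) := by rw [← hcond]; exact hnot h1
    have h4 : Real.log (q i) < Real.log (((i:ℝ))⁻¹) := by rw [Real.log_inv]; linarith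
    have hipos : (0:ℝ) < (i:ℝ) := by exact_mod_cast h1
    exact ((Real.log_lt_log_iff (hq_pos i) (by positivity)).mp h4).le
  -- the weighted sum
  set w : ℕ → ℝ := fun j => q (j+1) * WCETel.gg j with hwdef
  have hw_nonneg : ∀ j, 0 ≤ w j := fun j => mul_nonneg (hq_pos _).le (WCETel.gg_pos j).le
  have hw_le : ∀ j, w j ≤ WCETel.gg j := fun j =>
    mul_le_of_le_one_left (WCETel.gg_pos j).le (hq_le_one (j+1))
  have hw_summable : Summable w :=
    Summable.of_nonneg_of_le hw_nonneg hw_le WCETel.summable_gg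
  have hWeq : weightedCondEntropy μ X k = -Real.log (∑' j, w j) := by
    unfold weightedCondEntropy
    refine congrArg (fun t : ℝ => -Real.log t) (tsum_congr fun j => ?_)
    rw [hcond, neg_neg, Real.exp_log (hq_pos _), div_eq_mul_inv]
    rfl
  set W := ∑' j, w j with hWdef
  have hW_pos : 0 < W := by
    have h0 : w 0 ≤ W := Summable.le_tsum hw_summable 0 fun j _ => hw_nonneg j
    have : 0 < w 0 := mul_pos (hq_pos 1) (WCETel.gg_pos 0)
    linarith
  constructor
  · -- lower bound
    have hWub : W ≤ 2 * ((n:ℝ)+1)⁻¹ := by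
      rcases Nat.eq_zero_or_pos n with h0 | hpos
      · subst h0
        have h1 : W ≤ ∑' j, WCETel.gg j :=
          Summable.tsum_le_tsum hw_le hw_summable WCETel.summable_gg
        rw [WCETel.tsum_gg] at h1
        norm_num
        linarith
      · have hnR : (0:ℝ) < (n:ℝ) := by exact_mod_cast hpos
        have hsplit : W = ∑ j ∈ Finset.range n, w j + ∑' j, w (j + n) :=
          ((Summable.sum_add_tsum_nat_add n hw_summable).symm)
        have hhead : ∑ j ∈ Finset.range n, w j ≤ ((n:ℝ)+1)⁻¹ := by
          have h1 : ∀ j ∈ Finset.range n, w j ≤ (n:ℝ)⁻¹ * WCETel.gg j := by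
            intro j hj
            rw [Finset.mem_range] at hj
            have hq1 : q (j+1) ≤ q n := hq_mono (by omega)
            have hq2 : q n ≤ (n:ℝ)⁻¹ := hqlt n hpos (by omega)
            exact mul_le_mul_of_nonneg_right (hq1.trans hq2) (WCETel.gg_pos j).le
          calc ∑ j ∈ Finset.range n, w j
              ≤ ∑ j ∈ Finset.range n, (n:ℝ)⁻¹ * WCETel.gg j := Finset.sum_le_sum h1
            _ = (n:ℝ)⁻¹ * (1 - WCETel.ff n) := by rw [← Finset.mul_sum, WCETel.sum_range_gg]
            _ = ((n:ℝ)+1)⁻¹ := by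
                rw [WCETel.ff]
                field_simp
                ring
        have htail : ∑' j, w (j + n) ≤ ((n:ℝ)+1)⁻¹ := by
          have h1 : ∑' j, w (j + n) ≤ ∑' j, WCETel.gg (j + n) :=
            Summable.tsum_le_tsum (fun j => hw_le (j + n))
              ((summable_nat_add_iff n).mpr hw_summable)
              ((summable_nat_add_iff n).mpr WCETel.summable_gg)
          rw [WCETel.tsum_gg_add n, WCETel.ff] at h1
          exact h1
        rw [hsplit]
        linarith
    rw [hWeq, hn]
    push_cast
    have h2 : Real.log W ≤ Real.log (2 * ((n:ℝ)+1)⁻¹) := Real.log_le_log hW_pos hWub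
    rw [Real.log_mul (by norm_num) (by positivity), Real.log_inv] at h2
    linarith
  · -- upper bound
    have hwn : ((n:ℝ)+1)⁻¹ * WCETel.gg n ≤ W := by
      refine le_trans ?_ (Summable.le_tsum hw_summable n fun j _ => hw_nonneg j)
      exact mul_le_mul_of_nonneg_right hqI (WCETel.gg_pos n).le
    have hlb_pos : 0 < ((n:ℝ)+1)⁻¹ * WCETel.gg n := by
      have := WCETel.gg_pos n
      positivity
    have hlogW : Real.log (((n:ℝ)+1)⁻¹ * WCETel.gg n) ≤ Real.log W :=
      Real.log_le_log hlb_pos hwn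
    have hexp : Real.log (((n:ℝ)+1)⁻¹ * WCETel.gg n)
        = -(2 * Real.log ((n:ℝ)+1) + Real.log ((n:ℝ)+2)) := by
      rw [WCETel.gg, ← mul_inv, Real.log_inv,
        Real.log_mul (by positivity) (by positivity),
        Real.log_mul (by positivity) (by positivity)]
      ring
    have hkey : Real.log ((n:ℝ)+2) ≤ Real.log ((n:ℝ)+1) + ((n:ℝ)+1)⁻¹ := by
      have h1 : Real.log (((n:ℝ)+2)/((n:ℝ)+1)) ≤ ((n:ℝ)+2)/((n:ℝ)+1) - 1 :=
        Real.log_le_sub_one_of_pos (by positivity)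
      rw [Real.log_div (by positivity) (by positivity)] at h1
      have h2 : ((n:ℝ)+2)/((n:ℝ)+1) - 1 = ((n:ℝ)+1)⁻¹ := by
        field_simp
        norm_num
      linarith
    rw [hWeq, hn]
    push_cast
    rw [one_div]
    linarith
end
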